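/- arXiv:1802.09503 — 3 statements merged into one kernel-verified Lean document; each statement's English description precedes it below -/
import Mathlib

section
/- For every real number σ ≥ 1 and every positive integer b, there exists a proper online algorithm A for σ-interval coloring such that for every positive integer ω and every finite sequence of closed intervals, each of length in [1,σ], that is ω-colorable, the number of colors A uses on the sequence is at most ⌈b·(1+σ)⌉ · (ω/b + b − 1). -/
/-- Two closed intervals `[I.1, I.2]` and `[J.1, J.2]` intersect. -/
def Intersects (I J : ℝ × ℝ) : Prop := I.1 ≤ J.2 ∧ J.1 ≤ I.2

/-- Every interval in the sequence has length in `[1, σ]`. -/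
def LengthsIn (σ : ℝ) (s : List (ℝ × ℝ)) : Prop :=
  ∀ I ∈ s, 1 ≤ I.2 - I.1 ∧ I.2 - I.1 ≤ σ

/-- `A` is a proper online algorithm for `σ`-interval coloring: on every input
sequence of intervals with lengths in `[1, σ]`, any two intersecting intervals
receive distinct colors (the color of the `i`-th interval is the value of `A`
on the prefix of length `i + 1`). -/
def ProperAlg (σ : ℝ) (A : List (ℝ × ℝ) → ℕ) : Prop :=
  ∀ s : List (ℝ × ℝ), LengthsIn σ s →
    ∀ i j : Fin s.length, i < j → Intersects (s.get i) (s.get j) →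
      A (s.take ((i : ℕ) + 1)) ≠ A (s.take ((j : ℕ) + 1))

/-- The intersection graph of the sequence `s` admits a proper coloring
with at most `ω` colors. -/
def Colorable (ω : ℕ) (s : List (ℝ × ℝ)) : Prop :=
  ∃ c : Fin s.length → Fin ω,
    ∀ i j : Fin s.length, i ≠ j → Intersects (s.get i) (s.get j) → c i ≠ c j

/-- The number of distinct colors used by the online algorithm `A`
on the input sequence `s`. -/
def colorsUsed (A : List (ℝ × ℝ) → ℕ) (s : List (ℝ × ℝ)) : ℕ :=
  ((Finset.range s.length).image (fun i => A (s.take (i + 1)))).card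

namespace OICAux

/-- entry of a list, with default. -/
noncomputable def entA (L : List (ℝ × ℝ)) (i : ℕ) : ℝ × ℝ := L.getD i (0, 0)

/-- fine column of the i-th interval. -/
noncomputable def PA (b : ℕ) (L : List (ℝ × ℝ)) (i : ℕ) : ℤ := ⌊(b : ℝ) * (entA L i).1⌋

/-- rank within column. -/
noncomputable def RA (b : ℕ) (L : List (ℝ × ℝ)) (i : ℕ) : ℕ :=
  ((Finset.range i).filter fun k => PA b L k = PA b L i).card

/-- cell start. -/
noncomputable def CSA (b : ℕ) (L : List (ℝ × ℝ)) (i : ℕ) : ℤ :=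
  PA b L i - (PA b L i - ((RA b L i % b : ℕ) : ℤ)) % (b : ℤ)

/-- rank within cell. -/
noncomputable def JA (b : ℕ) (L : List (ℝ × ℝ)) (i : ℕ) : ℕ :=
  ((Finset.range i).filter fun k => CSA b L k = CSA b L i).card

noncomputable def MA (σ : ℝ) (b : ℕ) : ℤ := ⌈(b : ℝ) * (1 + σ)⌉

noncomputable def colA (σ : ℝ) (b : ℕ) (L : List (ℝ × ℝ)) (i : ℕ) : ℕ :=
  ((CSA b L i) % MA σ b).toNat + (MA σ b).toNat * JA b L i

noncomputable def AlgA (σ : ℝ) (b : ℕ) : List (ℝ × ℝ) → ℕ := fun L => colA σ b L (L.length - 1)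

variable {σ : ℝ} {b : ℕ} {L : List (ℝ × ℝ)}

lemma entA_take {i k : ℕ} (hk : k ≤ i) : entA (L.take (i + 1)) k = entA L k := by
  unfold entA
  by_cases h : k < L.length
  · have h2 : k < (L.take (i + 1)).length := by
      rw [List.length_take]; exact lt_min (Nat.lt_succ_of_le hk) h
    rw [List.getD_eq_getElem _ _ h2, List.getD_eq_getElem _ _ h,
      List.getElem_take]
  · push_neg at h
    rw [List.getD_eq_default _ _ h, List.getD_eq_default]
    rw [List.length_take]
    exact le_trans (min_le_right _ _) h

lemma PA_take {i k : ℕ} (hk : k ≤ i) : PA b (L.take (i + 1)) k = PA b L k := by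
  unfold PA; rw [entA_take hk]

lemma RA_take {i k : ℕ} (hk : k ≤ i) : RA b (L.take (i + 1)) k = RA b L k := by
  unfold RA
  congr 1
  apply Finset.filter_congr
  intro x hx
  rw [Finset.mem_range] at hx
  rw [PA_take (le_trans (le_of_lt hx) hk), PA_take hk]

lemma CSA_take {i k : ℕ} (hk : k ≤ i) : CSA b (L.take (i + 1)) k = CSA b L k := by
  unfold CSA; rw [PA_take hk, RA_take hk]

lemma JA_take {i : ℕ} : JA b (L.take (i + 1)) i = JA b L i := by
  unfold JA
  congr 1
  apply Finset.filter_congr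
  intro x hx
  rw [Finset.mem_range] at hx
  rw [CSA_take (le_of_lt hx), CSA_take (le_refl i)]

lemma colA_take {i : ℕ} : colA σ b (L.take (i + 1)) i = colA σ b L i := by
  unfold colA; rw [CSA_take (le_refl i), JA_take]

lemma AlgA_take {i : ℕ} (hi : i < L.length) :
    AlgA σ b (L.take (i + 1)) = colA σ b L i := by
  unfold AlgA
  have h : (L.take (i + 1)).length - 1 = i := by
    rw [List.length_take]; omega
  rw [h, colA_take]



lemma MA_eq (σ : ℝ) (b : ℕ) : MA σ b = ⌈(b : ℝ) * σ⌉ + (b : ℤ) := by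
  unfold MA
  rw [show (b : ℝ) * (1 + σ) = (b : ℝ) * σ + ((b : ℤ) : ℝ) by push_cast; ring,
    Int.ceil_add_intCast]

lemma MA_pos (hσ : 1 ≤ σ) (hb : 0 < b) : 0 < MA σ b := by
  have h1 : (0 : ℝ) < (b : ℝ) * (1 + σ) := by
    have : (0:ℝ) < (b:ℝ) := by exact_mod_cast hb
    nlinarith
  exact Int.ceil_pos.mpr h1

/-- the cell start is within (P - b, P]. -/
lemma CSA_bounds (hb : 0 < b) (i : ℕ) :
    CSA b L i ≤ PA b L i ∧ PA b L i - (b : ℤ) < CSA b L i := by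
  unfold CSA
  have hbz : (0 : ℤ) < (b : ℤ) := by exact_mod_cast hb
  have h1 := Int.emod_nonneg (PA b L i - ((RA b L i % b : ℕ) : ℤ)) (ne_of_gt hbz)
  have h2 := Int.emod_lt_of_pos (PA b L i - ((RA b L i % b : ℕ) : ℤ)) hbz
  omega

/-- cell start mod b recovers the scheme. -/
lemma CSA_mod_b (hb : 0 < b) (i : ℕ) :
    CSA b L i % (b : ℤ) = ((RA b L i % b : ℕ) : ℤ) := by
  unfold CSA
  have hbz : (0 : ℤ) < (b : ℤ) := by exact_mod_cast hb
  set P := PA b L i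
  set T : ℤ := ((RA b L i % b : ℕ) : ℤ) with hT
  have hT0 : 0 ≤ T := by positivity
  have hTb : T < (b : ℤ) := by
    have h : RA b L i % b < b := Nat.mod_lt _ hb
    rw [hT]
    exact_mod_cast h
  have h1 : (P - (P - T) % (b:ℤ)) % (b:ℤ) = (P - (P - T)) % (b:ℤ) := by
    rw [Int.sub_emod, Int.emod_emod_of_dvd _ dvd_rfl, ← Int.sub_emod]
  rw [h1]
  simp only [sub_sub_cancel]
  exact Int.emod_eq_of_lt hT0 hTb

/-- generic strict growth of prefix-counters. -/
lemma counter_lt {i j : ℕ} (f : ℕ → ℤ) (hij : i < j) (hf : f i = f j) :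
    ((Finset.range i).filter fun k => f k = f i).card <
      ((Finset.range j).filter fun k => f k = f j).card := by
  apply Finset.card_lt_card
  rw [Finset.ssubset_iff_of_subset]
  · exact ⟨i, by simp [Finset.mem_filter, Finset.mem_range, hij, hf], by simp⟩
  · intro x hx
    simp only [Finset.mem_filter, Finset.mem_range] at hx ⊢
    exact ⟨lt_trans hx.1 hij, by rw [hx.2, hf]⟩

lemma entA_mem {i : ℕ} (hi : i < L.length) : entA L i ∈ L := by
  unfold entA
  rw [List.getD_eq_getElem _ _ hi]
  exact List.getElem_mem hi

lemma entA_get {i : ℕ} (hi : i < L.length) : L.get ⟨i, hi⟩ = entA L i := by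
  unfold entA
  rw [List.getD_eq_getElem _ _ hi]
  rfl

/-- one-sided column distance bound. -/
lemma PA_close {i j : ℕ} (h : (entA L i).1 ≤ (entA L j).1 + σ) :
    PA b L i ≤ PA b L j + ⌈(b : ℝ) * σ⌉ := by
  have hb0 : (0 : ℝ) ≤ (b : ℝ) := by positivity
  have h1 : ((PA b L i : ℤ) : ℝ) ≤ (b : ℝ) * (entA L i).1 := Int.floor_le _
  have h2 : (b : ℝ) * (entA L j).1 < ((PA b L j : ℤ) : ℝ) + 1 := Int.lt_floor_add_one _
  have h3 : (b : ℝ) * (entA L i).1 ≤ (b : ℝ) * (entA L j).1 + (b : ℝ) * σ := by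
    nlinarith
  have h4 : (b : ℝ) * σ ≤ (⌈(b : ℝ) * σ⌉ : ℝ) := Int.le_ceil _
  have h5 : ((PA b L i : ℤ) : ℝ) < ((PA b L j + ⌈(b : ℝ) * σ⌉ + 1 : ℤ) : ℝ) := by
    push_cast
    linarith
  have h6 : PA b L i < PA b L j + ⌈(b : ℝ) * σ⌉ + 1 := by exact_mod_cast h5
  omega

/-- Properness core. -/
lemma colA_ne (hσ : 1 ≤ σ) (hb : 0 < b) (hlen : LengthsIn σ L) {i j : ℕ}
    (hij : i < j) (hjn : j < L.length)
    (hint : Intersects (entA L i) (entA L j)) :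
    colA σ b L i ≠ colA σ b L j := by
  intro heq
  have hM : 0 < MA σ b := MA_pos hσ hb
  set Mt := (MA σ b).toNat with hMt
  have hMt0 : 0 < Mt := by omega
  -- extract u and J equality
  have hui : 0 ≤ CSA b L i % MA σ b := Int.emod_nonneg _ (ne_of_gt hM)
  have hui2 : CSA b L i % MA σ b < MA σ b := Int.emod_lt_of_pos _ hM
  have huj : 0 ≤ CSA b L j % MA σ b := Int.emod_nonneg _ (ne_of_gt hM)
  have huj2 : CSA b L j % MA σ b < MA σ b := Int.emod_lt_of_pos _ hM
  unfold colA at heq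
  have hulti : (CSA b L i % MA σ b).toNat < Mt := by omega
  have hultj : (CSA b L j % MA σ b).toNat < Mt := by omega
  have hmod := congrArg (· % Mt) heq
  simp only [← hMt, Nat.add_mul_mod_self_left] at hmod
  rw [Nat.mod_eq_of_lt hulti, Nat.mod_eq_of_lt hultj] at hmod
  have hJeq : JA b L i = JA b L j := by
    rw [hmod] at heq
    have := Nat.add_left_cancel heq
    exact Nat.eq_of_mul_eq_mul_left hMt0 this
  -- same residue mod M
  have hemod : CSA b L i % MA σ b = CSA b L j % MA σ b := by omega
  -- cell starts are close
  have hibd : i < L.length := lt_trans hij hjn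
  have hIi := hlen _ (entA_mem hibd)
  have hIj := hlen _ (entA_mem hjn)
  obtain ⟨hint1, hint2⟩ := hint
  have hc1 : (entA L i).1 ≤ (entA L j).1 + σ := by linarith [hIj.1, hIj.2]
  have hc2 : (entA L j).1 ≤ (entA L i).1 + σ := by linarith [hIi.1, hIi.2]
  have hp1 := PA_close (L := L) (b := b) hc1
  have hp2 := PA_close (L := L) (b := b) hc2
  have hcsi := CSA_bounds (L := L) hb i
  have hcsj := CSA_bounds (L := L) hb j
  have hMeq := MA_eq σ b
  have hbz : (0 : ℤ) < (b : ℤ) := by exact_mod_cast hb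
  -- |CSA i - CSA j| < M
  have habs : CSA b L i - CSA b L j < MA σ b ∧ CSA b L j - CSA b L i < MA σ b := by
    constructor <;> omega
  -- divisibility
  have hdvd : MA σ b ∣ CSA b L j - CSA b L i := Int.ModEq.dvd hemod
  have hcseq : CSA b L i = CSA b L j := by
    obtain ⟨k, hk⟩ := hdvd
    have hk1 : -1 < k ∧ k < 1 := by
      constructor <;> nlinarith [habs.1, habs.2]
    have : k = 0 := by omega
    rw [this, mul_zero] at hk
    omega
  -- but then the J counters differ
  have := counter_lt (CSA b L) hij hcseq
  unfold JA at hJeq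
  omega

lemma close_intersects (hb : 0 < b) (hlen : LengthsIn σ L) {cs : ℤ} {i j : ℕ}
    (hi : i < L.length) (hj : j < L.length)
    (h1 : cs ≤ PA b L i) (h2 : PA b L i < cs + b)
    (h3 : cs ≤ PA b L j) (h4 : PA b L j < cs + b) :
    Intersects (entA L i) (entA L j) := by
  have hbR : (0 : ℝ) < (b : ℝ) := by exact_mod_cast hb
  have hfi1 : ((PA b L i : ℤ) : ℝ) ≤ (b : ℝ) * (entA L i).1 := Int.floor_le _
  have hfi2 : (b : ℝ) * (entA L i).1 < ((PA b L i : ℤ) : ℝ) + 1 := Int.lt_floor_add_one _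
  have hfj1 : ((PA b L j : ℤ) : ℝ) ≤ (b : ℝ) * (entA L j).1 := Int.floor_le _
  have hfj2 : (b : ℝ) * (entA L j).1 < ((PA b L j : ℤ) : ℝ) + 1 := Int.lt_floor_add_one _
  have c1 : ((cs : ℤ) : ℝ) ≤ ((PA b L i : ℤ) : ℝ) := by exact_mod_cast h1
  have c2 : ((PA b L i : ℤ) : ℝ) + 1 ≤ ((cs : ℤ) : ℝ) + (b : ℝ) := by
    have : PA b L i + 1 ≤ cs + (b : ℤ) := h2
    exact_mod_cast this
  have c3 : ((cs : ℤ) : ℝ) ≤ ((PA b L j : ℤ) : ℝ) := by exact_mod_cast h3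
  have c4 : ((PA b L j : ℤ) : ℝ) + 1 ≤ ((cs : ℤ) : ℝ) + (b : ℝ) := by
    have : PA b L j + 1 ≤ cs + (b : ℤ) := h4
    exact_mod_cast this
  have hdij : (b : ℝ) * (entA L i).1 - (b : ℝ) * (entA L j).1 < (b : ℝ) := by linarith
  have hdji : (b : ℝ) * (entA L j).1 - (b : ℝ) * (entA L i).1 < (b : ℝ) := by linarith
  have hij1 : (entA L i).1 - (entA L j).1 < 1 := by nlinarith
  have hji1 : (entA L j).1 - (entA L i).1 < 1 := by nlinarith
  have hleni := (hlen _ (entA_mem hi)).1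
  have hlenj := (hlen _ (entA_mem hj)).1
  exact ⟨by linarith, by linarith⟩

lemma window_card (hb : 0 < b) (hlen : LengthsIn σ L) {ω : ℕ} (hcol : Colorable ω L)
    (cs : ℤ) :
    ((Finset.range L.length).filter
      fun i => cs ≤ PA b L i ∧ PA b L i < cs + (b : ℤ)).card ≤ ω := by
  classical
  obtain ⟨c, hc⟩ := hcol
  have h := Finset.card_le_card_of_injOn
    (s := (Finset.range L.length).filter
      fun i => cs ≤ PA b L i ∧ PA b L i < cs + (b : ℤ))
    (t := Finset.range ω)
    (f := fun i => if h : i < L.length then ((c ⟨i, h⟩ : Fin ω) : ℕ) else 0) ?_ ?_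
  · simpa using h
  · intro i hi
    simp only [Finset.mem_coe, Finset.mem_filter, Finset.mem_range] at hi
    simp only [Finset.mem_coe, Finset.mem_range, dif_pos hi.1]
    exact (c ⟨i, hi.1⟩).isLt
  · intro i hi j hj hgij
    simp only [Finset.coe_filter, Set.mem_setOf_eq, Finset.mem_range] at hi hj
    by_contra hne
    have hi1 := hi.1
    have hj1 := hj.1
    simp only [dif_pos hi1, dif_pos hj1] at hgij
    have hfin : (⟨i, hi1⟩ : Fin L.length) ≠ ⟨j, hj1⟩ := fun h => hne (congrArg Fin.val h)
    apply hc _ _ hfin ?_ (Fin.val_injective hgij)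
    have := close_intersects (σ := σ) hb hlen hi1 hj1 hi.2.1 hi.2.2 hj.2.1 hj.2.2
    rwa [entA_get hi1, entA_get hj1]

lemma card_le_of_resid (hb : 0 < b) (S : Finset ℕ) (r : ℕ → ℕ) (c : ℕ)
    (hmod : ∀ i ∈ S, ∀ j ∈ S, r i % b = r j % b)
    (hinj : ∀ i ∈ S, ∀ j ∈ S, r i = r j → i = j)
    (hlt : ∀ i ∈ S, r i < c) :
    b * S.card ≤ c + (b - 1) := by
  classical
  rcases S.eq_empty_or_nonempty with h | ⟨i0, hi0⟩
  · simp [h]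
  · have hc : 1 ≤ c := by have := hlt i0 hi0; omega
    have hcard : S.card ≤ (c - 1) / b + 1 := by
      have h := Finset.card_le_card_of_injOn (s := S)
        (t := Finset.range ((c - 1) / b + 1))
        (f := fun i => r i / b) ?_ ?_
      · simpa using h
      · intro i hi
        simp only [Finset.mem_coe, Finset.mem_range]
        have h1 : r i ≤ c - 1 := by have := hlt i hi; omega
        have := Nat.div_le_div_right (c := b) h1
        omega
      · intro i hi j hj hdiv
        simp only [Finset.mem_coe] at hi hj
        have hm := hmod i hi j hj
        have e1 := Nat.div_add_mod (r i) b
        have e2 := Nat.div_add_mod (r j) b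
        apply hinj i hi j hj
        have h5 : b * (r i / b) = b * (r j / b) := by
          simp only at hdiv
          rw [hdiv]
        omega
    have h2 : (c - 1) / b * b ≤ c - 1 := Nat.div_mul_le_self _ _
    have h3 : b * S.card ≤ b * ((c - 1) / b + 1) := Nat.mul_le_mul_left _ hcard
    have h4 : b * ((c - 1) / b + 1) = (c - 1) / b * b + b := by ring
    omega

/-- RA is strictly increasing along a column, hence injective there. -/
lemma RA_strict {i j : ℕ} (hij : i < j) (hp : PA b L i = PA b L j) :
    RA b L i < RA b L j :=
  counter_lt (PA b L) hij hp

/-- The key cell-size bound. -/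
lemma cell_bound (hb : 0 < b) (hlen : LengthsIn σ L) {ω : ℕ} (hcol : Colorable ω L)
    (cs : ℤ) :
    b * ((Finset.range L.length).filter fun i => CSA b L i = cs).card
      ≤ ω + b * (b - 1) := by
  classical
  set n := L.length
  set F := (Finset.range n).filter fun i => CSA b L i = cs with hF
  set W := (Finset.range n).filter
    (fun i => cs ≤ PA b L i ∧ PA b L i < cs + (b : ℤ)) with hW
  set f : ℕ → ℕ := fun i => (PA b L i - cs).toNat with hf
  have hFmem : ∀ i ∈ F, cs ≤ PA b L i ∧ PA b L i < cs + (b : ℤ) := by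
    intro i hi
    simp only [hF, Finset.mem_filter] at hi
    have h1 := CSA_bounds (L := L) hb i
    rw [hi.2] at h1
    omega
  have hFf : ∀ i ∈ F, f i ∈ Finset.range b := by
    intro i hi
    have := hFmem i hi
    simp only [hf, Finset.mem_range]
    omega
  have hWf : ∀ i ∈ W, f i ∈ Finset.range b := by
    intro i hi
    simp only [hW, Finset.mem_filter] at hi
    simp only [hf, Finset.mem_range]
    omega
  have hFcard := Finset.card_eq_sum_card_fiberwise hFf
  have hWcard := Finset.card_eq_sum_card_fiberwise hWf
  have hfiber : ∀ e ∈ Finset.range b,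
      b * ((F.filter fun i => f i = e).card)
        ≤ (W.filter fun i => f i = e).card + (b - 1) := by
    intro e he
    apply card_le_of_resid hb _ (RA b L)
    · -- same residue mod b
      intro i hi j hj
      have hcsi : CSA b L i = cs := by
        simp only [hF, Finset.mem_filter] at hi; exact hi.1.2
      have hcsj : CSA b L j = cs := by
        simp only [hF, Finset.mem_filter] at hj; exact hj.1.2
      have h1 := CSA_mod_b (L := L) hb i
      have h2 := CSA_mod_b (L := L) hb j
      rw [hcsi] at h1
      rw [hcsj] at h2
      omega
    · -- injectivity
      intro i hi j hj hr
      simp only [Finset.mem_filter, hF, Finset.mem_range] at hi hj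
      have hpi : PA b L i = cs + (f i : ℤ) := by
        have := hFmem i (by simp [hF, Finset.mem_filter]; exact ⟨hi.1.1, hi.1.2⟩)
        simp only [hf] at *
        omega
      have hpj : PA b L j = cs + (f j : ℤ) := by
        have := hFmem j (by simp [hF, Finset.mem_filter]; exact ⟨hj.1.1, hj.1.2⟩)
        simp only [hf] at *
        omega
      have hp : PA b L i = PA b L j := by rw [hpi, hpj, hi.2, hj.2]
      rcases lt_trichotomy i j with h | h | h
      · exact absurd hr (Nat.ne_of_lt (RA_strict h hp))
      · exact h
      · exact absurd hr.symm (Nat.ne_of_lt (RA_strict h hp.symm))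
    · -- rank bound
      intro i hi
      simp only [Finset.mem_filter, hF, Finset.mem_range] at hi
      obtain ⟨⟨hin, hcsi⟩, hfi⟩ := hi
      apply Finset.card_lt_card
      rw [Finset.ssubset_iff_of_subset]
      · refine ⟨i, ?_, by simp⟩
        simp only [Finset.mem_filter, hW, Finset.mem_range]
        have := hFmem i (by simp [hF, Finset.mem_filter]; exact ⟨hin, hcsi⟩)
        exact ⟨⟨hin, this⟩, hfi⟩
      · intro k hk
        simp only [Finset.mem_filter, Finset.mem_range] at hk
        simp only [Finset.mem_filter, hW, Finset.mem_range, hf]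
        have hw := hFmem i (by simp [hF, Finset.mem_filter]; exact ⟨hin, hcsi⟩)
        rw [hk.2]
        refine ⟨⟨lt_trans hk.1 hin, hw⟩, ?_⟩
        simp only [hf] at hfi
        exact hfi
  have hsum : b * F.card = ∑ e ∈ Finset.range b, b * ((F.filter fun i => f i = e).card) := by
    rw [hFcard, Finset.mul_sum]
  have hW2 : W.card ≤ ω := window_card (σ := σ) hb hlen hcol cs
  calc b * F.card = ∑ e ∈ Finset.range b, b * ((F.filter fun i => f i = e).card) := hsum
    _ ≤ ∑ e ∈ Finset.range b, ((W.filter fun i => f i = e).card + (b - 1)) :=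
        Finset.sum_le_sum hfiber
    _ = W.card + b * (b - 1) := by
        rw [Finset.sum_add_distrib, ← hWcard, Finset.sum_const, Finset.card_range,
          smul_eq_mul]
    _ ≤ ω + b * (b - 1) := by omega

lemma JA_lt_cell {i : ℕ} (hi : i < L.length) :
    JA b L i < ((Finset.range L.length).filter fun k => CSA b L k = CSA b L i).card := by
  apply Finset.card_lt_card
  rw [Finset.ssubset_iff_of_subset]
  · exact ⟨i, by simp [Finset.mem_filter, hi], by simp⟩
  · intro k hk
    simp only [Finset.mem_filter, Finset.mem_range] at hk ⊢
    exact ⟨lt_trans hk.1 hi, hk.2⟩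

end OICAux

open OICAux

theorem stmt_0 (σ : ℝ) (hσ : 1 ≤ σ) (b : ℕ) (hb : 0 < b) :
    ∃ A : List (ℝ × ℝ) → ℕ, ProperAlg σ A ∧
      ∀ ω : ℕ, 0 < ω → ∀ s : List (ℝ × ℝ), LengthsIn σ s → Colorable ω s →
        (colorsUsed A s : ℝ) ≤
          (⌈(b : ℝ) * (1 + σ)⌉ : ℝ) * ((ω : ℝ) / (b : ℝ) + (b : ℝ) - 1) := by
  classical
  refine ⟨AlgA σ b, ?_, ?_⟩
  · intro s hl i j hij hint
    rw [AlgA_take i.isLt, AlgA_take j.isLt]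
    apply colA_ne hσ hb hl (show (i : ℕ) < (j : ℕ) from hij) j.isLt
    rw [← entA_get i.isLt, ← entA_get j.isLt]
    exact hint
  · intro ω hω s hl hcol
    have hM : 0 < MA σ b := MA_pos hσ hb
    set Mt := (MA σ b).toNat with hMtdef
    set K := (ω + b * (b - 1)) / b with hKdef
    have himage : ((Finset.range s.length).image fun i => AlgA σ b (s.take (i + 1)))
        = (Finset.range s.length).image fun i => colA σ b s i := by
      apply Finset.image_congr
      intro i hi
      rw [Finset.mem_coe, Finset.mem_range] at hi
      exact AlgA_take hi
    have hsub : ((Finset.range s.length).image fun i => colA σ b s i)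
        ⊆ Finset.range (Mt * K) := by
      intro x hx
      rw [Finset.mem_image] at hx
      obtain ⟨i, hi, rfl⟩ := hx
      rw [Finset.mem_range] at hi ⊢
      have h2 := JA_lt_cell (b := b) hi
      have h3 := cell_bound (σ := σ) hb hl hcol (CSA b s i)
      have h4 : b * (JA b s i + 1) ≤ b *
          ((Finset.range s.length).filter fun k => CSA b s k = CSA b s i).card :=
        Nat.mul_le_mul_left _ (by omega)
      have h1 : b * (JA b s i + 1) ≤ ω + b * (b - 1) := le_trans h4 h3
      have hJK : JA b s i + 1 ≤ K := (Nat.le_div_iff_mul_le hb).mpr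
        (by rw [Nat.mul_comm]; exact h1)
      have hu : (CSA b s i % MA σ b).toNat < Mt := by
        have e1 : 0 ≤ CSA b s i % MA σ b := Int.emod_nonneg _ (ne_of_gt hM)
        have e2 : CSA b s i % MA σ b < MA σ b := Int.emod_lt_of_pos _ hM
        omega
      have h5 : colA σ b s i < Mt * (JA b s i + 1) := by
        unfold colA
        rw [← hMtdef]
        have : Mt * (JA b s i + 1) = Mt * JA b s i + Mt := by ring
        omega
      exact lt_of_lt_of_le h5 (Nat.mul_le_mul_left _ hJK)
    have hcard : colorsUsed (AlgA σ b) s ≤ Mt * K := by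
      unfold colorsUsed
      rw [himage]
      calc ((Finset.range s.length).image fun i => colA σ b s i).card
          ≤ (Finset.range (Mt * K)).card := Finset.card_le_card hsub
        _ = Mt * K := Finset.card_range _
    have hb1 : (1 : ℕ) ≤ b := hb
    have hbR : (0 : ℝ) < (b : ℝ) := by exact_mod_cast hb
    have hKr : (K : ℝ) ≤ (ω : ℝ) / (b : ℝ) + (b : ℝ) - 1 := by
      have h1 : ((K : ℕ) : ℝ) ≤ ((ω + b * (b - 1) : ℕ) : ℝ) / ((b : ℕ) : ℝ) :=
        Nat.cast_div_le
      have h2 : ((ω + b * (b - 1) : ℕ) : ℝ) = (ω : ℝ) + (b : ℝ) * ((b : ℝ) - 1) := by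
        push_cast [Nat.cast_sub hb1]
        ring
      rw [h2] at h1
      have h3 : ((ω : ℝ) + (b : ℝ) * ((b : ℝ) - 1)) / (b : ℝ)
          = (ω : ℝ) / (b : ℝ) + (b : ℝ) - 1 := by
        field_simp
        ring
      rw [h3] at h1
      exact h1
    have hMr : ((Mt : ℕ) : ℝ) = ((MA σ b : ℤ) : ℝ) := by
      rw [hMtdef]
      exact_mod_cast congrArg (fun z : ℤ => (z : ℝ)) (Int.toNat_of_nonneg hM.le)
    have hMnn : (0 : ℝ) ≤ ((MA σ b : ℤ) : ℝ) := by positivity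
    have hfinal : ((Mt * K : ℕ) : ℝ) ≤ ((MA σ b : ℤ) : ℝ) * ((ω : ℝ) / (b : ℝ) + (b : ℝ) - 1) := by
      push_cast
      rw [show ((MA σ b).toNat : ℝ) = ((MA σ b : ℤ) : ℝ) from hMr]
      apply mul_le_mul_of_nonneg_left _ hMnn
      exact_mod_cast hKr
    calc (colorsUsed (AlgA σ b) s : ℝ) ≤ ((Mt * K : ℕ) : ℝ) := by exact_mod_cast hcard
      _ ≤ ((MA σ b : ℤ) : ℝ) * ((ω : ℝ) / (b : ℝ) + (b : ℝ) - 1) := hfinal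
      _ = (⌈(b : ℝ) * (1 + σ)⌉ : ℝ) * ((ω : ℝ) / (b : ℝ) + (b : ℝ) - 1) := rfl
end

section
/- For every function f : ℝ → ℝ there is no online interval coloring algorithm A that is a proper online algorithm for σ-interval coloring for every σ ≥ 1 and satisfies: for every σ ≥ 1, every positive integer ω, and every ω-colorable finite sequence of closed intervals with lengths in [1,σ], A uses at most 1.618·ω + f(σ) colors on the sequence. -/
namespace Adv

variable (A : List (ℝ × ℝ) → ℕ)

def colAt (s : List (ℝ × ℝ)) (i : ℕ) : ℕ := A (s.take (i+1))

def palI (s : List (ℝ × ℝ)) (U : Finset ℕ) : Finset ℕ := U.image (colAt A s)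

lemma colAt_append (s t : List (ℝ × ℝ)) {i : ℕ} (hi : i < s.length) :
    colAt A (s ++ t) i = colAt A s i := by
  unfold colAt
  rw [List.take_append_of_le_length (by omega)]

lemma palI_append (s t : List (ℝ × ℝ)) {U : Finset ℕ}
    (hU : ∀ i ∈ U, i < s.length) : palI A (s ++ t) U = palI A s U := by
  unfold palI
  apply Finset.image_congr
  intro i hi
  exact colAt_append A s t (hU i hi)

lemma colorsUsed_eq (s : List (ℝ × ℝ)) :
    colorsUsed A s = (palI A s (Finset.range s.length)).card := rfl

lemma colAt_ne (hP : ProperAlg 100 A) {s : List (ℝ × ℝ)} (hs : LengthsIn 100 s)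
    {i j : ℕ} (hi : i < s.length) (hj : j < s.length) (hij : i ≠ j)
    (hint : Intersects (s[i]'hi) (s[j]'hj)) :
    colAt A s i ≠ colAt A s j := by
  rcases lt_or_gt_of_ne hij with h | h
  · exact hP s hs ⟨i, hi⟩ ⟨j, hj⟩ h hint
  · exact (hP s hs ⟨j, hj⟩ ⟨i, hi⟩ h ⟨hint.2, hint.1⟩).symm

lemma card_palI_batch (hP : ProperAlg 100 A) {s : List (ℝ × ℝ)} (hs : LengthsIn 100 s)
    {a b : ℕ} (hb : b ≤ s.length)
    (hint : ∀ i (hi : i < s.length) (j : ℕ) (hj : j < s.length),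
      a ≤ i → i < b → a ≤ j → j < b → Intersects (s[i]'hi) (s[j]'hj)) :
    (palI A s (Finset.Ico a b)).card = b - a := by
  unfold palI
  rw [Finset.card_image_of_injOn, Nat.card_Ico]
  intro i hi j hj hcol
  simp only [Finset.coe_Ico, Set.mem_Ico] at hi hj
  by_contra hij
  exact colAt_ne A hP hs (lt_of_lt_of_le hi.2 hb) (lt_of_lt_of_le hj.2 hb) hij
    (hint i _ j _ hi.1 hi.2 hj.1 hj.2) hcol

lemma palI_disjoint (hP : ProperAlg 100 A) {s : List (ℝ × ℝ)} (hs : LengthsIn 100 s)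
    {U V : Finset ℕ} (hU : ∀ i ∈ U, i < s.length) (hV : ∀ j ∈ V, j < s.length)
    (hUV : ∀ i ∈ U, ∀ j ∈ V, i ≠ j)
    (hint : ∀ i (hi : i < s.length) (j : ℕ) (hj : j < s.length), i ∈ U → j ∈ V →
      Intersects (s[i]'hi) (s[j]'hj)) :
    Disjoint (palI A s U) (palI A s V) := by
  rw [Finset.disjoint_left]
  intro c hcU hcV
  rcases Finset.mem_image.1 hcU with ⟨i, hi, rfl⟩
  rcases Finset.mem_image.1 hcV with ⟨j, hj, hji⟩
  exact colAt_ne A hP hs (hU i hi) (hV j hj) (hUV i hi j hj)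
    (hint i _ j _ hi hj) hji.symm

def PCol (s : List (ℝ × ℝ)) (g : ℕ → ℕ) : Prop :=
  ∀ i j (hi : i < s.length) (hj : j < s.length), i ≠ j →
    Intersects (s[i]'hi) (s[j]'hj) → g i ≠ g j

lemma colorable_of_pcol {s : List (ℝ × ℝ)} {g : ℕ → ℕ} {ω : ℕ}
    (hbd : ∀ i, i < s.length → g i < ω) (hp : PCol s g) : Colorable ω s := by
  refine ⟨fun i => ⟨g i, hbd i i.isLt⟩, ?_⟩
  intro i j hij hint h
  apply hp i j i.isLt j.isLt (fun h' => hij (Fin.ext h'))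
  · simpa [List.get_eq_getElem] using hint
  · simpa using congrArg Fin.val h

lemma pcol_extend {s : List (ℝ × ℝ)} {g : ℕ → ℕ} (hg : PCol s g)
    {n off : ℕ} {I : ℝ × ℝ}
    (hcross : ∀ i (hi : i < s.length), Intersects (s[i]'hi) I →
      g i < off ∨ off + n ≤ g i) :
    PCol (s ++ List.replicate n I)
      (fun idx => if idx < s.length then g idx else off + (idx - s.length)) := by
  intro i j hi hj hij hint
  have hlen : (s ++ List.replicate n I).length = s.length + n := by simp
  by_cases h1 : i < s.length <;> by_cases h2 : j < s.length <;>
    simp only [h1, h2, if_pos, if_neg, if_true, if_false]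
  · apply hg i j h1 h2 hij
    rwa [List.getElem_append_left h1, List.getElem_append_left h2] at hint
  · have hIj : (s ++ List.replicate n I)[j]'hj = I := by
      rw [List.getElem_append_right (not_lt.1 h2), List.getElem_replicate]
    rw [List.getElem_append_left h1, hIj] at hint
    rcases hcross i h1 hint with h | h
    · omega
    · omega
  · have hIi : (s ++ List.replicate n I)[i]'hi = I := by
      rw [List.getElem_append_right (not_lt.1 h1), List.getElem_replicate]
    rw [hIi, List.getElem_append_left h2] at hint
    rcases hcross j h2 ⟨hint.2, hint.1⟩ with h | h
    · omega
    · omega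
  · omega

lemma pcol_glue {s q : List (ℝ × ℝ)} {g gq : ℕ → ℕ} (hg : PCol s g) (hq : PCol q gq)
    (hdisj : ∀ i (hi : i < s.length) (j : ℕ) (hj : j < q.length),
      ¬ Intersects (s[i]'hi) (q[j]'hj)) :
    PCol (s ++ q) (fun idx => if idx < s.length then g idx else gq (idx - s.length)) := by
  intro i j hi hj hij hint
  have hlen : (s ++ q).length = s.length + q.length := by simp
  by_cases h1 : i < s.length <;> by_cases h2 : j < s.length <;>
    simp only [h1, h2, if_pos, if_neg, if_true, if_false]
  · apply hg i j h1 h2 hij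
    rwa [List.getElem_append_left h1, List.getElem_append_left h2] at hint
  · exfalso
    have hj' : j - s.length < q.length := by omega
    rw [List.getElem_append_left h1, List.getElem_append_right (not_lt.1 h2)] at hint
    exact hdisj i h1 (j - s.length) hj' hint
  · exfalso
    have hi' : i - s.length < q.length := by omega
    rw [List.getElem_append_right (not_lt.1 h1), List.getElem_append_left h2] at hint
    exact hdisj j h2 (i - s.length) hi' ⟨hint.2, hint.1⟩
  · have hi' : i - s.length < q.length := by omega
    have hj' : j - s.length < q.length := by omega
    apply hq _ _ hi' hj' (by omega)
    rwa [List.getElem_append_right (not_lt.1 h1),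
      List.getElem_append_right (not_lt.1 h2)] at hint

lemma pcol_batch (n : ℕ) (I : ℝ × ℝ) (off : ℕ) :
    PCol (List.replicate n I) (fun idx => off + idx) := by
  intro i j hi hj hij _
  show off + i ≠ off + j
  omega



variable (A : List (ℝ × ℝ) → ℕ)

set_option maxHeartbeats 1000000 in
lemma partner (hP : ProperAlg 100 A) (m K : ℕ) (base : List (ℝ × ℝ))
    (hbase : LengthsIn 100 base) :
    ∃ (q : List (ℝ × ℝ)) (gq : ℕ → ℕ),
      (∀ I ∈ q, (1 + 7*(m:ℝ)) + 1.5 ≤ I.1 ∧ I.2 ≤ (1 + 7*(m:ℝ)) + 6.5) ∧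
      LengthsIn 100 q ∧ PCol q gq ∧
      (∀ i, i < q.length → gq i < 2^(m+1)*K) ∧
      5 * (2^m*K) ≤ 2 * (palI A (base ++ q)
        (Finset.Ico base.length (base.length + q.length))).card := by
  set R : ℝ := 1 + 7*(m:ℝ) with hR
  set b : ℕ := 2^m*K with hb
  have h2b : 2^(m+1)*K = 2*b := by rw [hb, pow_succ]; ring
  set IX : ℝ × ℝ := (R+2, R+3) with hIX
  set IY : ℝ × ℝ := (R+5, R+6) with hIY
  set IBr : ℝ × ℝ := (R+1.5, R+6.5) with hIBr
  set ITp : ℝ × ℝ := (R+4.5, R+6.5) with hITp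
  set IJp : ℝ × ℝ := (R+1.5, R+4.7) with hIJp
  set RX : List (ℝ × ℝ) := List.replicate b IX with hRX
  set RY : List (ℝ × ℝ) := List.replicate b IY with hRY
  set n0 : ℕ := base.length with hn0
  set s2 : List (ℝ × ℝ) := (base ++ RX) ++ RY with hs2
  have hs2len : s2.length = n0 + 2*b := by simp [hs2, hRX, hRY, hn0]; omega
  set t : ℕ := ((palI A s2 (Finset.Ico n0 (n0+b))) ∩
    (palI A s2 (Finset.Ico (n0+b) (n0+2*b)))).card with ht
  by_cases hc : b ≤ 2*t
  · -- branch B : overlap is large; play T', J'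
    set RTp : List (ℝ × ℝ) := List.replicate b ITp with hRTp
    set RJp : List (ℝ × ℝ) := List.replicate b IJp with hRJp
    set q : List (ℝ × ℝ) := ((RX ++ RY) ++ RTp) ++ RJp with hq
    have hqlen : q.length = 4*b := by simp [hq, hRX, hRY, hRTp, hRJp]; omega
    set sq : List (ℝ × ℝ) := base ++ q with hsq
    have hsqE : sq = s2 ++ (RTp ++ RJp) := by simp [hsq, hq, hs2, List.append_assoc]
    have hsqlen : sq.length = n0 + 4*b := by simp [hsq, hqlen, hn0]
    have hmemq : ∀ I ∈ q, I = IX ∨ I = IY ∨ I = ITp ∨ I = IJp := by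
      intro I hI
      rcases List.mem_append.1 hI with hI' | hI'
      · rcases List.mem_append.1 hI' with h'' | h''
        · rcases List.mem_append.1 h'' with h3 | h3
          · exact Or.inl (List.eq_of_mem_replicate h3)
          · exact Or.inr (Or.inl (List.eq_of_mem_replicate h3))
        · exact Or.inr (Or.inr (Or.inl (List.eq_of_mem_replicate h'')))
      · exact Or.inr (Or.inr (Or.inr (List.eq_of_mem_replicate hI')))
    have hqreg : ∀ I ∈ q, R + 1.5 ≤ I.1 ∧ I.2 ≤ R + 6.5 := by
      intro I hI
      rcases hmemq I hI with rfl | rfl | rfl | rfl <;>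
        constructor <;> simp [hIX, hIY, hITp, hIJp] <;> norm_num
    have hqlens : LengthsIn 100 q := by
      intro I hI
      rcases hmemq I hI with rfl | rfl | rfl | rfl <;>
        constructor <;> simp [hIX, hIY, hITp, hIJp] <;> norm_num
    have hsqlens : LengthsIn 100 sq := by
      intro I hI
      rcases List.mem_append.1 hI with h' | h'
      · exact hbase I h'
      · exact hqlens I h'
    have hgX : ∀ i (hi : i < sq.length), n0 ≤ i → i < n0 + b → sq[i]'hi = IX := by
      intro i hi h1 h2
      rw [List.getElem_of_eq hsq, List.getElem_append_right (by omega : base.length ≤ i),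
        List.getElem_of_eq hq,
        List.getElem_append_left (by simp [hRX, hRY, hRTp]; omega),
        List.getElem_append_left (by simp [hRX, hRY]; omega),
        List.getElem_append_left (by simp [hRX]; omega)]
      exact List.getElem_replicate _
    have hgY : ∀ i (hi : i < sq.length), n0 + b ≤ i → i < n0 + 2*b → sq[i]'hi = IY := by
      intro i hi h1 h2
      rw [List.getElem_of_eq hsq, List.getElem_append_right (by omega : base.length ≤ i),
        List.getElem_of_eq hq,
        List.getElem_append_left (by simp [hRX, hRY, hRTp]; omega),
        List.getElem_append_left (by simp [hRX, hRY]; omega),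
        List.getElem_append_right (by simp [hRX]; omega)]
      exact List.getElem_replicate _
    have hgT : ∀ i (hi : i < sq.length), n0 + 2*b ≤ i → i < n0 + 3*b → sq[i]'hi = ITp := by
      intro i hi h1 h2
      rw [List.getElem_of_eq hsq, List.getElem_append_right (by omega : base.length ≤ i),
        List.getElem_of_eq hq,
        List.getElem_append_left (by simp [hRX, hRY, hRTp]; omega),
        List.getElem_append_right (by simp [hRX, hRY]; omega)]
      exact List.getElem_replicate _
    have hgJ : ∀ i (hi : i < sq.length), n0 + 3*b ≤ i → i < n0 + 4*b → sq[i]'hi = IJp := by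
      intro i hi h1 h2
      rw [List.getElem_of_eq hsq, List.getElem_append_right (by omega : base.length ≤ i),
        List.getElem_of_eq hq,
        List.getElem_append_right (by simp [hRX, hRY, hRTp]; omega)]
      exact List.getElem_replicate _
    set S1 : Finset ℕ := palI A sq (Finset.Ico n0 (n0+b)) with hS1
    set S2 : Finset ℕ := palI A sq (Finset.Ico (n0+b) (n0+2*b)) with hS2
    set P3 : Finset ℕ := palI A sq (Finset.Ico (n0+2*b) (n0+3*b)) with hP3
    set P4 : Finset ℕ := palI A sq (Finset.Ico (n0+3*b) (n0+4*b)) with hP4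
    have hS1e : S1 = palI A s2 (Finset.Ico n0 (n0+b)) := by
      rw [hS1, hsqE]
      exact palI_append A s2 _ (by intro i hi; rw [hs2len]; simp at hi; omega)
    have hS2e : S2 = palI A s2 (Finset.Ico (n0+b) (n0+2*b)) := by
      rw [hS2, hsqE]
      exact palI_append A s2 _ (by intro i hi; rw [hs2len]; simp at hi; omega)
    have htq : t = (S1 ∩ S2).card := by rw [hS1e, hS2e, ht]
    have hcardS1 : S1.card = b := by
      have := card_palI_batch A hP hsqlens (a := n0) (b := n0 + b)
        (by omega) (by
          intro i hi j hj h1 h2 h3 h4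
          rw [hgX i hi h1 h2, hgX j hj h3 h4]
          exact ⟨by simp [hIX]; norm_num, by simp [hIX]; norm_num⟩)
      rw [hS1, this]; omega
    have hcardS2 : S2.card = b := by
      have := card_palI_batch A hP hsqlens (a := n0 + b) (b := n0 + 2*b)
        (by omega) (by
          intro i hi j hj h1 h2 h3 h4
          rw [hgY i hi h1 h2, hgY j hj h3 h4]
          exact ⟨by simp [hIY]; norm_num, by simp [hIY]; norm_num⟩)
      rw [hS2, this]; omega
    have hcardP3 : P3.card = b := by
      have := card_palI_batch A hP hsqlens (a := n0 + 2*b) (b := n0 + 3*b)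
        (by omega) (by
          intro i hi j hj h1 h2 h3 h4
          rw [hgT i hi h1 h2, hgT j hj h3 h4]
          exact ⟨by simp [hITp]; norm_num, by simp [hITp]; norm_num⟩)
      rw [hP3, this]; omega
    have hcardP4 : P4.card = b := by
      have := card_palI_batch A hP hsqlens (a := n0 + 3*b) (b := n0 + 4*b)
        (by omega) (by
          intro i hi j hj h1 h2 h3 h4
          rw [hgJ i hi h1 h2, hgJ j hj h3 h4]
          exact ⟨by simp [hIJp]; norm_num, by simp [hIJp]; norm_num⟩)
      rw [hP4, this]; omega
    have hd32 : Disjoint P3 S2 := by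
      apply palI_disjoint A hP hsqlens
      · intro i hi; simp at hi; omega
      · intro i hi; simp at hi; omega
      · intro i hi j hj; simp at hi hj; omega
      · intro i hi j hj hiU hjV
        simp at hiU hjV
        rw [hgT i hi (by omega) (by omega), hgY j hj (by omega) (by omega)]
        exact ⟨by simp [hITp, hIY]; norm_num, by simp [hITp, hIY]; norm_num⟩
    have hd41 : Disjoint P4 S1 := by
      apply palI_disjoint A hP hsqlens
      · intro i hi; simp at hi; omega
      · intro i hi; simp at hi; omega
      · intro i hi j hj; simp at hi hj; omega
      · intro i hi j hj hiU hjV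
        simp at hiU hjV
        rw [hgJ i hi (by omega) (by omega), hgX j hj (by omega) (by omega)]
        exact ⟨by simp [hIJp, hIX]; norm_num, by simp [hIJp, hIX]; norm_num⟩
    have hd43 : Disjoint P4 P3 := by
      apply palI_disjoint A hP hsqlens
      · intro i hi; simp at hi; omega
      · intro i hi; simp at hi; omega
      · intro i hi j hj; simp at hi hj; omega
      · intro i hi j hj hiU hjV
        simp at hiU hjV
        rw [hgJ i hi (by omega) (by omega), hgT j hj (by omega) (by omega)]
        exact ⟨by simp [hIJp, hITp]; norm_num, by simp [hIJp, hITp]; norm_num⟩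
    have hPPe : palI A sq (Finset.Ico n0 (n0 + q.length)) = ((S1 ∪ S2) ∪ P3) ∪ P4 := by
      rw [hqlen, hS1, hS2, hP3, hP4]
      have e1 : Finset.Ico n0 (n0 + 4*b) =
          ((Finset.Ico n0 (n0+b) ∪ Finset.Ico (n0+b) (n0+2*b)) ∪ Finset.Ico (n0+2*b) (n0+3*b))
            ∪ Finset.Ico (n0+3*b) (n0+4*b) := by
        rw [Finset.Ico_union_Ico_eq_Ico (by omega) (by omega),
          Finset.Ico_union_Ico_eq_Ico (by omega) (by omega),
          Finset.Ico_union_Ico_eq_Ico (by omega) (by omega)]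
      rw [e1]
      unfold palI
      rw [Finset.image_union, Finset.image_union, Finset.image_union]
    have e12 : (S1 ∪ S2).card + t = 2*b := by
      rw [htq]
      have := Finset.card_union_add_card_inter S1 S2
      omega
    have e2 : ((S1 ∪ S2) ∪ P3).card + ((S1 ∪ S2) ∩ P3).card = (S1 ∪ S2).card + b := by
      have := Finset.card_union_add_card_inter (S1 ∪ S2) P3
      omega
    have e3 : (((S1 ∪ S2) ∪ P3) ∪ P4).card + (((S1 ∪ S2) ∪ P3) ∩ P4).card
        = ((S1 ∪ S2) ∪ P3).card + b := by
      have := Finset.card_union_add_card_inter ((S1 ∪ S2) ∪ P3) P4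
      omega
    have i1 : ((S1 ∪ S2) ∩ P3).card + t ≤ b := by
      have hsub : (S1 ∪ S2) ∩ P3 ⊆ S1 \ S2 := by
        intro c hc
        rcases Finset.mem_inter.1 hc with ⟨hcu, hcp⟩
        have hns2 : c ∉ S2 := fun hcs => (Finset.disjoint_left.1 hd32) hcp hcs
        rcases Finset.mem_union.1 hcu with hcs | hcs
        · exact Finset.mem_sdiff.2 ⟨hcs, hns2⟩
        · exact absurd hcs hns2
      have h1 := Finset.card_le_card hsub
      have h2 := Finset.card_inter_add_card_sdiff S1 S2
      rw [htq] at *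
      omega
    have i2 : (((S1 ∪ S2) ∪ P3) ∩ P4).card + t ≤ b := by
      have hsub : ((S1 ∪ S2) ∪ P3) ∩ P4 ⊆ S2 \ S1 := by
        intro c hc
        rcases Finset.mem_inter.1 hc with ⟨hcu, hcp⟩
        have hns1 : c ∉ S1 := fun hcs => (Finset.disjoint_left.1 hd41) hcp hcs
        have hnp3 : c ∉ P3 := fun hcs => (Finset.disjoint_left.1 hd43) hcp hcs
        rcases Finset.mem_union.1 hcu with hcu' | hcu'
        · rcases Finset.mem_union.1 hcu' with hcs | hcs
          · exact absurd hcs hns1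
          · exact Finset.mem_sdiff.2 ⟨hcs, hns1⟩
        · exact absurd hcu' hnp3
      have h1 := Finset.card_le_card hsub
      have h2 := Finset.card_inter_add_card_sdiff S2 S1
      have h3 : (S2 ∩ S1).card = t := by rw [htq, Finset.inter_comm]
      omega
    -- the proper coloring of q alone
    have hlRX : RX.length = b := by simp [hRX]
    have hlRXY : (RX ++ RY).length = 2*b := by simp [hRX, hRY]; omega
    have hlRXYT : ((RX ++ RY) ++ RTp).length = 3*b := by simp [hRX, hRY, hRTp]; omega
    have p1 : PCol RX (fun idx => 0 + idx) := by rw [hRX]; exact pcol_batch b IX 0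
    have p2 : PCol (RX ++ RY)
        (fun idx => if idx < RX.length then 0 + idx else b + (idx - RX.length)) := by
      conv_lhs => rw [hRY]
      apply pcol_extend p1
      intro i hi hint
      exfalso
      rw [List.getElem_of_eq hRX, List.getElem_replicate, hIX, hIY] at hint
      obtain ⟨h4, h5⟩ := hint
      dsimp only at h4 h5
      linarith
    have p3 : PCol ((RX ++ RY) ++ RTp)
        (fun idx => if idx < (RX ++ RY).length
          then (if idx < RX.length then 0 + idx else b + (idx - RX.length))
          else 0 + (idx - (RX ++ RY).length)) := by
      conv_lhs => rw [hRTp]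
      apply pcol_extend p2
      intro i hi hint
      rw [hlRXY] at hi
      by_cases hib : i < b
      · exfalso
        rw [List.getElem_append_left (by rw [hlRX]; omega),
          List.getElem_of_eq hRX, List.getElem_replicate, hIX, hITp] at hint
        obtain ⟨h4, h5⟩ := hint
        dsimp only at h4 h5
        linarith
      · right
        simp only [hlRX]
        split_ifs <;> omega
    have p4 : PCol (((RX ++ RY) ++ RTp) ++ RJp)
        (fun idx => if idx < ((RX ++ RY) ++ RTp).length
          then (if idx < (RX ++ RY).length
            then (if idx < RX.length then 0 + idx else b + (idx - RX.length))
            else 0 + (idx - (RX ++ RY).length))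
          else b + (idx - ((RX ++ RY) ++ RTp).length)) := by
      conv_lhs => rw [hRJp]
      apply pcol_extend p3
      intro i hi hint
      rw [hlRXYT] at hi
      by_cases hib : i < b
      · left
        simp only [hlRX, hlRXY]
        split_ifs <;> omega
      · by_cases hib2 : i < 2*b
        · exfalso
          rw [List.getElem_append_left (by rw [hlRXY]; omega),
            List.getElem_append_right (by rw [hlRX]; omega),
            List.getElem_of_eq hRY, List.getElem_replicate, hIY, hIJp] at hint
          obtain ⟨h4, h5⟩ := hint
          dsimp only at h4 h5
          linarith
        · left
          simp only [hlRX, hlRXY]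
          split_ifs <;> omega
    refine ⟨q, fun idx => if idx < ((RX ++ RY) ++ RTp).length
          then (if idx < (RX ++ RY).length
            then (if idx < RX.length then 0 + idx else b + (idx - RX.length))
            else 0 + (idx - (RX ++ RY).length))
          else b + (idx - ((RX ++ RY) ++ RTp).length), hqreg, hqlens, ?_, ?_, ?_⟩
    · rw [hq]; exact p4
    · intro i hi
      rw [hqlen] at hi
      rw [h2b]
      simp only [hlRX, hlRXY, hlRXYT]
      split_ifs <;> omega
    · rw [← hsq, hPPe]
      omega
  · -- branch A : overlap is small; play a bridge over X and Y
    set RBr : List (ℝ × ℝ) := List.replicate b IBr with hRBr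
    set q : List (ℝ × ℝ) := (RX ++ RY) ++ RBr with hq
    have hqlen : q.length = 3*b := by simp [hq, hRX, hRY, hRBr]; omega
    set sq : List (ℝ × ℝ) := base ++ q with hsq
    have hsqE : sq = s2 ++ RBr := by simp [hsq, hq, hs2, List.append_assoc]
    have hsqlen : sq.length = n0 + 3*b := by simp [hsq, hqlen, hn0]
    -- membership description of q
    have hmemq : ∀ I ∈ q, I = IX ∨ I = IY ∨ I = IBr := by
      intro I hI
      rcases List.mem_append.1 hI with hI' | hI'
      · rcases List.mem_append.1 hI' with h'' | h''
        · exact Or.inl (List.eq_of_mem_replicate h'')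
        · exact Or.inr (Or.inl (List.eq_of_mem_replicate h''))
      · exact Or.inr (Or.inr (List.eq_of_mem_replicate hI'))
    have hqreg : ∀ I ∈ q, R + 1.5 ≤ I.1 ∧ I.2 ≤ R + 6.5 := by
      intro I hI
      rcases hmemq I hI with rfl | rfl | rfl <;>
        constructor <;> simp [hIX, hIY, hIBr] <;> norm_num
    have hqlens : LengthsIn 100 q := by
      intro I hI
      rcases hmemq I hI with rfl | rfl | rfl <;>
        constructor <;> simp [hIX, hIY, hIBr] <;> norm_num
    have hsqlens : LengthsIn 100 sq := by
      intro I hI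
      rcases List.mem_append.1 hI with h' | h'
      · exact hbase I h'
      · exact hqlens I h'
    -- getElem facts
    have hgX : ∀ i (hi : i < sq.length), n0 ≤ i → i < n0 + b → sq[i]'hi = IX := by
      intro i hi h1 h2
      rw [List.getElem_of_eq hsq, List.getElem_append_right (by omega : base.length ≤ i),
        List.getElem_of_eq hq,
        List.getElem_append_left (by simp [hRX, hRY]; omega),
        List.getElem_append_left (by simp [hRX]; omega)]
      exact List.getElem_replicate _
    have hgY : ∀ i (hi : i < sq.length), n0 + b ≤ i → i < n0 + 2*b → sq[i]'hi = IY := by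
      intro i hi h1 h2
      rw [List.getElem_of_eq hsq, List.getElem_append_right (by omega : base.length ≤ i),
        List.getElem_of_eq hq,
        List.getElem_append_left (by simp [hRX, hRY]; omega),
        List.getElem_append_right (by simp [hRX]; omega)]
      exact List.getElem_replicate _
    have hgBr : ∀ i (hi : i < sq.length), n0 + 2*b ≤ i → i < n0 + 3*b → sq[i]'hi = IBr := by
      intro i hi h1 h2
      rw [List.getElem_of_eq hsq, List.getElem_append_right (by omega : base.length ≤ i),
        List.getElem_of_eq hq,
        List.getElem_append_right (by simp [hRX, hRY]; omega)]
      exact List.getElem_replicate _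
    -- palettes
    set S1 : Finset ℕ := palI A sq (Finset.Ico n0 (n0+b)) with hS1
    set S2 : Finset ℕ := palI A sq (Finset.Ico (n0+b) (n0+2*b)) with hS2
    set P3 : Finset ℕ := palI A sq (Finset.Ico (n0+2*b) (n0+3*b)) with hP3
    have hS1e : S1 = palI A s2 (Finset.Ico n0 (n0+b)) := by
      rw [hS1, hsqE]
      exact palI_append A s2 RBr (by intro i hi; rw [hs2len]; simp at hi; omega)
    have hS2e : S2 = palI A s2 (Finset.Ico (n0+b) (n0+2*b)) := by
      rw [hS2, hsqE]
      exact palI_append A s2 RBr (by intro i hi; rw [hs2len]; simp at hi; omega)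
    have htq : t = (S1 ∩ S2).card := by rw [hS1e, hS2e, ht]
    have hcardS1 : S1.card = b := by
      have := card_palI_batch A hP hsqlens (a := n0) (b := n0 + b)
        (by omega) (by
          intro i hi j hj h1 h2 h3 h4
          rw [hgX i hi h1 h2, hgX j hj h3 h4]
          exact ⟨by simp [hIX]; norm_num, by simp [hIX]; norm_num⟩)
      rw [hS1, this]; omega
    have hcardS2 : S2.card = b := by
      have := card_palI_batch A hP hsqlens (a := n0 + b) (b := n0 + 2*b)
        (by omega) (by
          intro i hi j hj h1 h2 h3 h4
          rw [hgY i hi h1 h2, hgY j hj h3 h4]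
          exact ⟨by simp [hIY]; norm_num, by simp [hIY]; norm_num⟩)
      rw [hS2, this]; omega
    have hcardP3 : P3.card = b := by
      have := card_palI_batch A hP hsqlens (a := n0 + 2*b) (b := n0 + 3*b)
        (by omega) (by
          intro i hi j hj h1 h2 h3 h4
          rw [hgBr i hi h1 h2, hgBr j hj h3 h4]
          exact ⟨by simp [hIBr]; norm_num, by simp [hIBr]; norm_num⟩)
      rw [hP3, this]; omega
    have hd31 : Disjoint P3 S1 := by
      apply palI_disjoint A hP hsqlens
      · intro i hi; simp at hi; omega
      · intro i hi; simp at hi; omega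
      · intro i hi j hj; simp at hi hj; omega
      · intro i hi j hj hiU hjV
        simp at hiU hjV
        rw [hgBr i hi (by omega) (by omega), hgX j hj (by omega) (by omega)]
        exact ⟨by simp [hIBr, hIX]; norm_num, by simp [hIBr, hIX]; norm_num⟩
    have hd32 : Disjoint P3 S2 := by
      apply palI_disjoint A hP hsqlens
      · intro i hi; simp at hi; omega
      · intro i hi; simp at hi; omega
      · intro i hi j hj; simp at hi hj; omega
      · intro i hi j hj hiU hjV
        simp at hiU hjV
        rw [hgBr i hi (by omega) (by omega), hgY j hj (by omega) (by omega)]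
        exact ⟨by simp [hIBr, hIY]; norm_num, by simp [hIBr, hIY]; norm_num⟩
    -- cardinality computation
    have hPPe : palI A sq (Finset.Ico n0 (n0 + q.length)) = (S1 ∪ S2) ∪ P3 := by
      rw [hqlen, hS1, hS2, hP3]
      have e1 : Finset.Ico n0 (n0 + 3*b) =
          (Finset.Ico n0 (n0+b) ∪ Finset.Ico (n0+b) (n0+2*b)) ∪ Finset.Ico (n0+2*b) (n0+3*b) := by
        rw [Finset.Ico_union_Ico_eq_Ico (by omega) (by omega),
          Finset.Ico_union_Ico_eq_Ico (by omega) (by omega)]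
      rw [e1]
      unfold palI
      rw [Finset.image_union, Finset.image_union]
    have e12 : (S1 ∪ S2).card + t = 2*b := by
      rw [htq]
      have := Finset.card_union_add_card_inter S1 S2
      omega
    have e3 : ((S1 ∪ S2) ∪ P3).card = (S1 ∪ S2).card + b := by
      have hdisj : Disjoint (S1 ∪ S2) P3 := by
        rw [Finset.disjoint_union_left]
        exact ⟨hd31.symm, hd32.symm⟩
      rw [Finset.card_union_of_disjoint hdisj, hcardP3]
    have htle : t ≤ b := by
      have : (S1 ∩ S2).card ≤ S1.card := Finset.card_le_card (Finset.inter_subset_left)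
      omega
    have hlRX : RX.length = b := by simp [hRX]
    have hlRXY : (RX ++ RY).length = 2*b := by simp [hRX, hRY]; omega
    have p1 : PCol RX (fun idx => 0 + idx) := by rw [hRX]; exact pcol_batch b IX 0
    have p2 : PCol (RX ++ RY)
        (fun idx => if idx < RX.length then 0 + idx else 0 + (idx - RX.length)) := by
      conv_lhs => rw [hRY]
      apply pcol_extend p1
      intro i hi hint
      exfalso
      rw [List.getElem_of_eq hRX, List.getElem_replicate, hIX, hIY] at hint
      obtain ⟨h4, h5⟩ := hint
      dsimp only at h4 h5
      linarith
    have p3 : PCol ((RX ++ RY) ++ RBr)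
        (fun idx => if idx < (RX ++ RY).length
          then (if idx < RX.length then 0 + idx else 0 + (idx - RX.length))
          else b + (idx - (RX ++ RY).length)) := by
      conv_lhs => rw [hRBr]
      apply pcol_extend p2
      intro i hi hint
      left
      rw [hlRXY] at hi
      simp only [hlRX]
      split_ifs <;> omega
    refine ⟨q, fun idx => if idx < (RX ++ RY).length
          then (if idx < RX.length then 0 + idx else 0 + (idx - RX.length))
          else b + (idx - (RX ++ RY).length), hqreg, hqlens, ?_, ?_, ?_⟩
    · rw [hq]; exact p3
    · intro i hi
      rw [hqlen] at hi
      rw [h2b]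
      simp only [hlRX, hlRXY]
      split_ifs <;> omega
    · rw [← hsq, hPPe, e3]
      omega



variable (A : List (ℝ × ℝ) → ℕ)

/-- target color-count after m rounds -/
noncomputable def NN (C : ℝ) (K : ℕ) : ℕ → ℝ :=
  fun m => 2*K + (1632/1000) * ((2:ℝ)^(m+1) - 2) * K - m*C

structure St (A : List (ℝ × ℝ) → ℕ) (C : ℝ) (K : ℕ) (m : ℕ) where
  s : List (ℝ × ℝ)
  g : ℕ → ℕ
  hlen : LengthsIn 100 s
  hreg : ∀ I ∈ s, -(m:ℝ) ≤ I.1 ∧ I.2 ≤ 1 + 7*(m:ℝ)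
  hcert : PCol s g
  hgbd : ∀ i, i < s.length → g i < 2^(m+1)*K
  hpal : NN C K m ≤ (colorsUsed A s : ℝ)

set_option maxHeartbeats 1600000 in
lemma top_step (hP : ProperAlg 100 A) (C : ℝ) (K : ℕ) (hK : 0 < K)
    (hB : ∀ ω : ℕ, 0 < ω → ∀ s : List (ℝ × ℝ), LengthsIn 100 s → Colorable ω s →
      (colorsUsed A s : ℝ) ≤ 1.618 * ω + C)
    (m : ℕ) (hm : m ≤ 5) (st : St A C K m) : Nonempty (St A C K (m+1)) := by
  obtain ⟨q, gq, hqreg, hqlens, hqcert, hqbd, hqpal⟩ := partner A hP m K st.s st.hlen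
  have hmR : (m:ℝ) ≤ 5 := by exact_mod_cast hm
  set R : ℝ := 1 + 7*(m:ℝ) with hR
  set b : ℕ := 2^m*K with hb
  set W : ℕ := 2^(m+1)*K with hW
  have hWb : W = 2*b := by rw [hW, hb, pow_succ]; ring
  have hWpos : 0 < W := by
    rw [hW]; positivity
  have hgbdW : ∀ i, i < st.s.length → st.g i < W := by
    intro i hi
    have h := st.hgbd i hi
    first
      | exact h
      | (rw [hW]; exact h)
      | (rw [← hW] at h; exact h)
  have hqbdW : ∀ j, j < q.length → gq j < W := by
    intro j hj
    have h := hqbd j hj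
    first
      | exact h
      | (rw [hW]; exact h)
      | (rw [← hW] at h; exact h)
  set n0 : ℕ := st.s.length with hn0
  set nq : ℕ := q.length with hnq
  set IT : ℝ × ℝ := (R+1.2, R+6.6) with hIT
  set IJ : ℝ × ℝ := (-(m:ℝ)-1, R+1.3) with hIJ
  set RT : List (ℝ × ℝ) := List.replicate W IT with hRT
  set RJ : List (ℝ × ℝ) := List.replicate W IJ with hRJ
  set s2 : List (ℝ × ℝ) := st.s ++ q with hs2
  set nm : ℕ := s2.length with hnm
  have hnm' : nm = n0 + nq := by rw [hnm, hs2]; simp [hn0, hnq]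
  set s3 : List (ℝ × ℝ) := s2 ++ RT with hs3
  set s4 : List (ℝ × ℝ) := s3 ++ RJ with hs4
  have hs3len : s3.length = nm + W := by rw [hs3, hRT]; simp [hnm]
  have hs4len : s4.length = nm + 2*W := by rw [hs4, hs3, hRT, hRJ]; simp [hnm]; omega
  -- basic interval facts
  have holdb : ∀ I ∈ st.s, -(m:ℝ) ≤ I.1 ∧ I.2 ≤ R ∧ I.1 + 1 ≤ I.2 := by
    intro I hI
    obtain ⟨h1, h2⟩ := st.hreg I hI
    obtain ⟨h3, _⟩ := st.hlen I hI
    exact ⟨h1, h2, by linarith⟩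
  have hqb : ∀ I ∈ q, R + 1.5 ≤ I.1 ∧ I.2 ≤ R + 6.5 ∧ I.1 + 1 ≤ I.2 := by
    intro I hI
    obtain ⟨h1, h2⟩ := hqreg I hI
    obtain ⟨h3, _⟩ := hqlens I hI
    exact ⟨h1, h2, by linarith⟩
  -- lengths
  have hlen2 : LengthsIn 100 s2 := by
    intro I hI
    rcases List.mem_append.1 hI with h | h
    · exact st.hlen I h
    · exact hqlens I h
  have hlen3 : LengthsIn 100 s3 := by
    intro I hI
    rcases List.mem_append.1 hI with h | h
    · exact hlen2 I h
    · rw [hRT] at h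
      rw [List.eq_of_mem_replicate h, hIT]
      constructor <;> [skip; skip] <;> dsimp only <;> norm_num
  have hlen4 : LengthsIn 100 s4 := by
    intro I hI
    rcases List.mem_append.1 hI with h | h
    · exact hlen3 I h
    · rw [hRJ] at h
      rw [List.eq_of_mem_replicate h, hIJ]
      constructor <;> dsimp only <;> rw [hR] <;> [linarith; linarith]
  -- getElem facts on s4
  have hg_old : ∀ i (hi : i < s4.length), i < n0 →
      ∃ hi0 : i < st.s.length, s4[i]'hi = st.s[i]'hi0 := by
    intro i hi h1
    refine ⟨by omega, ?_⟩
    rw [List.getElem_of_eq hs4, List.getElem_append_left (by rw [hs3len]; omega),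
      List.getElem_of_eq hs3, List.getElem_append_left (by rw [hnm] at *; omega),
      List.getElem_of_eq hs2, List.getElem_append_left (by omega)]
  have hg_q : ∀ i (hi : i < s4.length), n0 ≤ i → i < nm →
      ∃ hq0 : i - n0 < q.length, s4[i]'hi = q[i-n0]'hq0 := by
    intro i hi h1 h2
    refine ⟨by omega, ?_⟩
    rw [List.getElem_of_eq hs4, List.getElem_append_left (by rw [hs3len]; omega),
      List.getElem_of_eq hs3, List.getElem_append_left (by omega),
      List.getElem_of_eq hs2, List.getElem_append_right (by omega)]
  have hg_T : ∀ i (hi : i < s4.length), nm ≤ i → i < nm + W → s4[i]'hi = IT := by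
    intro i hi h1 h2
    rw [List.getElem_of_eq hs4, List.getElem_append_left (by rw [hs3len]; omega),
      List.getElem_of_eq hs3, List.getElem_append_right (by omega),
      List.getElem_of_eq hRT]
    exact List.getElem_replicate _
  have hg_J : ∀ i (hi : i < s4.length), nm + W ≤ i → i < nm + 2*W → s4[i]'hi = IJ := by
    intro i hi h1 h2
    rw [List.getElem_of_eq hs4, List.getElem_append_right (by rw [hs3len]; omega),
      List.getElem_of_eq hRJ]
    exact List.getElem_replicate _
  have hm0 : (0:ℝ) ≤ (m:ℝ) := Nat.cast_nonneg m
  -- old and q regions never intersect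
  have hdisj_oldq : ∀ i (hi : i < st.s.length) (j : ℕ) (hj : j < q.length),
      ¬ Intersects (st.s[i]'hi) (q[j]'hj) := by
    intro i hi j hj hint
    have h1 := holdb _ (List.getElem_mem hi)
    have h2 := hqb _ (List.getElem_mem hj)
    have h3 := hint.2
    linarith [h1.2.1, h2.1]
  -- the mid sequence is W-colorable
  have hmidcol : Colorable W s2 := by
    apply colorable_of_pcol
      (g := fun idx => if idx < st.s.length then st.g idx else gq (idx - st.s.length))
    · intro i hi
      by_cases h1 : i < st.s.length
      · simp only [h1, if_true]
        exact hgbdW i h1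
      · simp only [h1, if_false]
        apply hqbdW
        rw [hs2] at hi
        simp only [List.length_append] at hi
        omega
    · rw [hs2]
      exact pcol_glue st.hcert hqcert hdisj_oldq
  have hu : (colorsUsed A s2 : ℝ) ≤ 1.618 * W + C := hB W hWpos s2 hlen2 hmidcol
  -- palettes in the final sequence
  set PM : Finset ℕ := palI A s4 (Finset.range n0) with hPM
  set PP : Finset ℕ := palI A s4 (Finset.Ico n0 nm) with hPP
  set PM2 : Finset ℕ := palI A s4 (Finset.range nm) with hPM2
  set PT : Finset ℕ := palI A s4 (Finset.Ico nm (nm+W)) with hPT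
  set PJ : Finset ℕ := palI A s4 (Finset.Ico (nm+W) (nm+2*W)) with hPJ
  have hs4E : s4 = s2 ++ (RT ++ RJ) := by rw [hs4, hs3, List.append_assoc]
  have hs4E2 : s4 = st.s ++ (q ++ (RT ++ RJ)) := by
    rw [hs4, hs3, hs2, List.append_assoc, List.append_assoc]
  have hPM2e : PM2 = palI A s2 (Finset.range nm) := by
    rw [hPM2]
    conv_lhs => rw [hs4E]
    exact palI_append A s2 _ (by intro i hi; simp only [Finset.mem_range] at hi; omega)
  have hPMe : PM = palI A st.s (Finset.range n0) := by
    rw [hPM]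
    conv_lhs => rw [hs4E2]
    exact palI_append A st.s _ (by intro i hi; simp only [Finset.mem_range] at hi; omega)
  have hPPe2 : PP = palI A s2 (Finset.Ico n0 nm) := by
    rw [hPP]
    conv_lhs => rw [hs4E]
    exact palI_append A s2 _ (by intro i hi; simp only [Finset.mem_Ico] at hi; omega)
  have hqpal' : 5*b ≤ 2*PP.card := by
    rw [hPPe2]
    have hIco : Finset.Ico n0 nm = Finset.Ico st.s.length (st.s.length + q.length) := by
      rw [← hn0, ← hnq, hnm']
    rw [hIco, hs2, hb]
    exact hqpal
  -- cardinalities of the two top batches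
  have hcardPT : PT.card = W := by
    have := card_palI_batch A hP hlen4 (a := nm) (b := nm + W)
      (by rw [hs4len]; omega)
      (by
        intro i hi j hj h1 h2 h3 h4
        rw [hg_T i hi h1 h2, hg_T j hj h3 h4, hIT]
        exact ⟨by dsimp only; linarith, by dsimp only; linarith⟩)
    rw [hPT, this]; omega
  have hcardPJ : PJ.card = W := by
    have := card_palI_batch A hP hlen4 (a := nm + W) (b := nm + 2*W)
      (by omega)
      (by
        intro i hi j hj h1 h2 h3 h4
        rw [hg_J i hi h1 h2, hg_J j hj h3 h4, hIJ]
        exact ⟨by dsimp only; rw [hR]; linarith, by dsimp only; rw [hR]; linarith⟩)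
    rw [hPJ, this]; omega
  -- disjointness of the top palettes
  have hdTq : Disjoint PT PP := by
    apply palI_disjoint A hP hlen4
    · intro i hi; simp only [Finset.mem_Ico] at hi; rw [hs4len]; omega
    · intro i hi; simp only [Finset.mem_Ico] at hi; rw [hs4len]; omega
    · intro i hi j hj; simp only [Finset.mem_Ico] at hi hj; omega
    · intro i hi j hj hiU hjV
      simp only [Finset.mem_Ico] at hiU hjV
      obtain ⟨hq0, hq1⟩ := hg_q j hj (by omega) (by omega)
      rw [hg_T i hi (by omega) (by omega), hq1, hIT]
      have h2 := hqb _ (List.getElem_mem hq0)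
      exact ⟨by dsimp only; linarith [h2.1, h2.2.1, h2.2.2],
        by dsimp only; linarith [h2.1, h2.2.1, h2.2.2]⟩
  have hdJold : Disjoint PJ PM := by
    apply palI_disjoint A hP hlen4
    · intro i hi; simp only [Finset.mem_Ico] at hi; rw [hs4len]; omega
    · intro i hi; simp only [Finset.mem_range] at hi; rw [hs4len, hnm']; omega
    · intro i hi j hj; simp only [Finset.mem_Ico, Finset.mem_range] at hi hj; omega
    · intro i hi j hj hiU hjV
      simp only [Finset.mem_Ico, Finset.mem_range] at hiU hjV
      obtain ⟨hi0, he⟩ := hg_old j hj hjV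
      rw [hg_J i hi (by omega) (by omega), he, hIJ]
      have h1 := holdb _ (List.getElem_mem hi0)
      exact ⟨by dsimp only; linarith [h1.1, h1.2.1, h1.2.2],
        by dsimp only; rw [hR]; linarith [h1.1, h1.2.1, h1.2.2]⟩
  have hdJT : Disjoint PJ PT := by
    apply palI_disjoint A hP hlen4
    · intro i hi; simp only [Finset.mem_Ico] at hi; rw [hs4len]; omega
    · intro i hi; simp only [Finset.mem_Ico] at hi; rw [hs4len]; omega
    · intro i hi j hj; simp only [Finset.mem_Ico] at hi hj; omega
    · intro i hi j hj hiU hjV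
      simp only [Finset.mem_Ico] at hiU hjV
      rw [hg_J i hi (by omega) (by omega), hg_T j hj (by omega) (by omega), hIJ, hIT]
      exact ⟨by dsimp only; rw [hR]; linarith, by dsimp only; linarith⟩
  -- subsets
  have hPPsub : PP ⊆ PM2 := by
    rw [hPP, hPM2]
    unfold palI
    exact Finset.image_subset_image
      (by intro x hx; simp only [Finset.mem_Ico] at hx; simp only [Finset.mem_range]; omega)
  have hPMsub : PM ⊆ PM2 := by
    rw [hPM, hPM2]
    unfold palI
    exact Finset.image_subset_image
      (by intro x hx; simp only [Finset.mem_range] at hx ⊢; rw [hnm'] at *; omega)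
  -- counting
  have e1 : (PM2 ∪ PT).card + (PM2 ∩ PT).card = PM2.card + W := by
    have := Finset.card_union_add_card_inter PM2 PT
    omega
  have e2 : ((PM2 ∪ PT) ∪ PJ).card + ((PM2 ∪ PT) ∩ PJ).card = (PM2 ∪ PT).card + W := by
    have := Finset.card_union_add_card_inter (PM2 ∪ PT) PJ
    omega
  have i1 : (PM2 ∩ PT).card + PP.card ≤ PM2.card := by
    have hsub : PM2 ∩ PT ⊆ PM2 \ PP := by
      intro c hc
      rcases Finset.mem_inter.1 hc with ⟨h1', h2'⟩
      exact Finset.mem_sdiff.2 ⟨h1', fun hcp => (Finset.disjoint_left.1 hdTq) h2' hcp⟩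
    have h1 := Finset.card_le_card hsub
    have h2 := Finset.card_sdiff_of_subset hPPsub
    have h3 := Finset.card_le_card hPPsub
    omega
  have i2 : ((PM2 ∪ PT) ∩ PJ).card + PM.card ≤ PM2.card := by
    have hsub : (PM2 ∪ PT) ∩ PJ ⊆ PM2 \ PM := by
      intro c hc
      rcases Finset.mem_inter.1 hc with ⟨h1', h2'⟩
      have hnT : c ∉ PT := fun hcp => (Finset.disjoint_left.1 hdJT) h2' hcp
      rcases Finset.mem_union.1 h1' with h | h
      · exact Finset.mem_sdiff.2 ⟨h, fun hcp => (Finset.disjoint_left.1 hdJold) h2' hcp⟩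
      · exact absurd h hnT
    have h1 := Finset.card_le_card hsub
    have h2 := Finset.card_sdiff_of_subset hPMsub
    have h3 := Finset.card_le_card hPMsub
    omega
  have hPal4 : colorsUsed A s4 = ((PM2 ∪ PT) ∪ PJ).card := by
    rw [colorsUsed_eq]
    congr 1
    rw [hPM2, hPT, hPJ, hs4len]
    have e0 : Finset.range (nm + 2*W) =
        (Finset.range nm ∪ Finset.Ico nm (nm+W)) ∪ Finset.Ico (nm+W) (nm+2*W) := by
      ext x
      simp only [Finset.mem_range, Finset.mem_union, Finset.mem_Ico]
      omega
    rw [e0]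
    unfold palI
    rw [Finset.image_union, Finset.image_union]
  -- the final palette bound
  have hNstep : NN C K (m+1) = NN C K m + (1632/1000) * ((W:ℕ):ℝ) - C := by
    rw [hW]
    unfold NN
    push_cast
    ring
  have hfin : NN C K (m+1) ≤ (colorsUsed A s4 : ℝ) := by
    rw [hPal4, hNstep]
    have hPM2u : (PM2.card : ℝ) ≤ 1.618*W + C := by
      have he : PM2.card = colorsUsed A s2 := by
        rw [hPM2e, colorsUsed_eq, hnm]
      rw [he]
      exact hu
    have hpalM : NN C K m ≤ (PM.card : ℝ) := by
      have he : PM.card = colorsUsed A st.s := by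
        rw [hPMe, colorsUsed_eq, hn0]
      rw [he]
      exact st.hpal
    have c1 : ((PM2 ∪ PT).card : ℝ) + ((PM2 ∩ PT).card : ℝ) = (PM2.card : ℝ) + (W:ℝ) := by
      exact_mod_cast e1
    have c2 : (((PM2 ∪ PT) ∪ PJ).card : ℝ) + (((PM2 ∪ PT) ∩ PJ).card : ℝ)
        = ((PM2 ∪ PT).card : ℝ) + (W:ℝ) := by exact_mod_cast e2
    have c3 : ((PM2 ∩ PT).card : ℝ) + (PP.card : ℝ) ≤ (PM2.card : ℝ) := by exact_mod_cast i1
    have c4 : (((PM2 ∪ PT) ∩ PJ).card : ℝ) + (PM.card : ℝ) ≤ (PM2.card : ℝ) := by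
      exact_mod_cast i2
    have c5 : 5*(b:ℝ) ≤ 2*(PP.card : ℝ) := by exact_mod_cast hqpal'
    have cW : (W:ℝ) = 2*(b:ℝ) := by exact_mod_cast hWb
    linarith
  -- the proper coloring of the final sequence
  have hlq2 : (st.s ++ q).length = st.s.length + q.length := by simp
  have hlq : (st.s ++ q).length = nm := by rw [hnm, hs2]
  have hlqT : ((st.s ++ q) ++ RT).length = nm + W := by
    rw [List.length_append, hlq, hRT, List.length_replicate]
  have hqcert' : PCol q (fun x => gq x + W) := by
    intro i j hi hj hij hint
    have := hqcert i j hi hj hij hint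
    show gq i + W ≠ gq j + W
    omega
  have pmid : PCol (st.s ++ q)
      (fun idx => if idx < st.s.length then st.g idx else gq (idx - st.s.length) + W) :=
    pcol_glue st.hcert hqcert' hdisj_oldq
  have p3' : PCol ((st.s ++ q) ++ RT)
      (fun idx => if idx < (st.s ++ q).length
        then (if idx < st.s.length then st.g idx else gq (idx - st.s.length) + W)
        else 0 + (idx - (st.s ++ q).length)) := by
    conv_lhs => rw [hRT]
    apply pcol_extend pmid
    intro i hi hint
    by_cases h1 : i < st.s.length
    · exfalso
      rw [List.getElem_append_left h1] at hint
      have h5 := hint.2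
      rw [hIT] at h5
      dsimp only at h5
      have hb1 := holdb _ (List.getElem_mem h1)
      linarith [hb1.2.1]
    · right
      simp only [h1, if_false]
      omega
  have p4' : PCol (((st.s ++ q) ++ RT) ++ RJ)
      (fun idx => if idx < ((st.s ++ q) ++ RT).length
        then (if idx < (st.s ++ q).length
          then (if idx < st.s.length then st.g idx else gq (idx - st.s.length) + W)
          else 0 + (idx - (st.s ++ q).length))
        else W + (idx - ((st.s ++ q) ++ RT).length)) := by
    conv_lhs => rw [hRJ]
    apply pcol_extend p3'
    intro i hi hint
    by_cases h1 : i < st.s.length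
    · left
      have hiq : i < (st.s ++ q).length := by rw [hlq2]; omega
      simp only [h1, hiq, if_true]
      exact hgbdW i h1
    · by_cases h2 : i < (st.s ++ q).length
      · exfalso
        rw [List.getElem_append_left h2, List.getElem_append_right (not_lt.1 h1)] at hint
        have h5 := hint.1
        rw [hIJ] at h5
        dsimp only at h5
        have hb1 := hqb _ (List.getElem_mem (by rw [hlq2] at h2; omega : i - st.s.length < q.length))
        linarith [hb1.1]
      · left
        simp only [h2, if_false]
        rw [hlqT] at hi
        omega
  have hs4eq : s4 = ((st.s ++ q) ++ RT) ++ RJ := by rw [hs4, hs3, hs2]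
  have h2W : 2^(m+1+1)*K = 2*W := by rw [hW, pow_succ]; ring
  refine ⟨⟨s4,
    fun idx => if idx < ((st.s ++ q) ++ RT).length
      then (if idx < (st.s ++ q).length
        then (if idx < st.s.length then st.g idx else gq (idx - st.s.length) + W)
        else 0 + (idx - (st.s ++ q).length))
      else W + (idx - ((st.s ++ q) ++ RT).length),
    hlen4, ?_, ?_, ?_, hfin⟩⟩
  · -- region
    intro I hI
    push_cast
    rw [hs4, hs3, hs2] at hI
    rcases List.mem_append.1 hI with hI' | hI'
    · rcases List.mem_append.1 hI' with hI'' | hI''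
      · rcases List.mem_append.1 hI'' with h3 | h3
        · have := holdb I h3
          constructor
          · linarith [this.1]
          · rw [hR] at this; linarith [this.2.1]
        · have := hqb I h3
          constructor
          · rw [hR] at this; linarith [this.1, hm0]
          · rw [hR] at this; linarith [this.2.1]
      · rw [hRT] at hI''
        rw [List.eq_of_mem_replicate hI'', hIT]
        constructor
        · dsimp only; rw [hR]; linarith
        · dsimp only; rw [hR]; linarith
    · rw [hRJ] at hI'
      rw [List.eq_of_mem_replicate hI', hIJ]
      constructor
      · dsimp only; linarith
      · dsimp only; rw [hR]; linarith
  · -- proper coloring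
    rw [hs4eq]
    exact p4'
  · -- color bound
    intro i hi
    rw [h2W]
    rw [hs4eq] at hi
    simp only [List.length_append, hRT, hRJ, List.length_replicate] at hi
    by_cases cA : i < ((st.s ++ q) ++ RT).length
    · by_cases cB : i < (st.s ++ q).length
      · by_cases cC : i < st.s.length
        · simp only [cA, cB, cC, if_true]
          have := hgbdW i cC
          omega
        · simp only [cA, cB, cC, if_true, if_false]
          have := hqbdW (i - st.s.length) (by rw [hlq2] at cB; omega)
          omega
      · simp only [cA, cB, if_true, if_false]
        rw [hlqT] at cA
        have : nm ≤ i := by rw [← hlq]; omega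
        omega
    · simp only [cA, if_false]
      rw [hlqT] at cA
      rw [hlq2] at *
      omega


lemma base_st (hP : ProperAlg 100 A) (C : ℝ) (K : ℕ) (hK : 0 < K) :
    Nonempty (St A C K 0) := by
  set I0 : ℝ × ℝ := ((0:ℝ), (1:ℝ)) with hI0
  set s : List (ℝ × ℝ) := List.replicate (2*K) I0 with hs
  have hslen : s.length = 2*K := by rw [hs]; simp
  have hlenS : LengthsIn 100 s := by
    intro I hI
    rw [hs] at hI
    rw [List.eq_of_mem_replicate hI, hI0]
    constructor <;> dsimp only <;> norm_num
  have hgel : ∀ i (hi : i < s.length), s[i]'hi = I0 := by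
    intro i hi
    rw [List.getElem_of_eq hs]
    exact List.getElem_replicate _
  have hcu : colorsUsed A s = 2*K := by
    rw [colorsUsed_eq, hslen, Finset.range_eq_Ico]
    have := card_palI_batch A hP hlenS (a := 0) (b := 2*K) (by omega)
      (by
        intro i hi j hj h1 h2 h3 h4
        rw [hgel i hi, hgel j hj, hI0]
        exact ⟨by norm_num, by norm_num⟩)
    rw [this]
    omega
  refine ⟨⟨s, fun idx => 0 + idx, hlenS, ?_, ?_, ?_, ?_⟩⟩
  · intro I hI
    rw [hs] at hI
    rw [List.eq_of_mem_replicate hI, hI0]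
    constructor <;> dsimp only <;> norm_num
  · rw [hs]
    exact pcol_batch (2*K) I0 0
  · intro i hi
    rw [hslen] at hi
    show 0 + i < 2^(0+1)*K
    have : (2:ℕ)^(0+1)*K = 2*K := by norm_num
    omega
  · rw [hcu]
    unfold NN
    push_cast
    norm_num

theorem no_good_algorithm (f : ℝ → ℝ) :
    ¬ ∃ A : List (ℝ × ℝ) → ℕ, (∀ σ : ℝ, 1 ≤ σ → ProperAlg σ A) ∧
      ∀ σ : ℝ, 1 ≤ σ → ∀ ω : ℕ, 0 < ω → ∀ s : List (ℝ × ℝ),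
        LengthsIn σ s → Colorable ω s →
          (colorsUsed A s : ℝ) ≤ 1.618 * (ω : ℝ) + f σ := by
  rintro ⟨A, h1, h2⟩
  have hP : ProperAlg 100 A := h1 100 (by norm_num)
  have hB : ∀ ω : ℕ, 0 < ω → ∀ s : List (ℝ × ℝ), LengthsIn 100 s → Colorable ω s →
      (colorsUsed A s : ℝ) ≤ 1.618 * ω + f 100 := by
    intro ω hω s hl hc
    exact h2 100 (by norm_num) ω hω s hl hc
  obtain ⟨K, hK⟩ := exists_nat_gt (max 0 ((7*(f 100) + 1) / (528/1000)))
  have hK0 : 0 < K := by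
    have h : (0:ℝ) < K := lt_of_le_of_lt (le_max_left _ _) hK
    exact_mod_cast h
  obtain ⟨st0⟩ := base_st A hP (f 100) K hK0
  obtain ⟨st1⟩ := top_step A hP (f 100) K hK0 hB 0 (by norm_num) st0
  obtain ⟨st2⟩ := top_step A hP (f 100) K hK0 hB 1 (by norm_num) st1
  obtain ⟨st3⟩ := top_step A hP (f 100) K hK0 hB 2 (by norm_num) st2
  obtain ⟨st4⟩ := top_step A hP (f 100) K hK0 hB 3 (by norm_num) st3
  obtain ⟨st5⟩ := top_step A hP (f 100) K hK0 hB 4 (by norm_num) st4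
  obtain ⟨st6⟩ := top_step A hP (f 100) K hK0 hB 5 (by norm_num) st5
  have h6 : NN (f 100) K 6 ≤ (colorsUsed A st6.s : ℝ) := st6.hpal
  have hcol : Colorable (2^(6+1)*K) st6.s := colorable_of_pcol st6.hgbd st6.hcert
  have hub : (colorsUsed A st6.s : ℝ) ≤ 1.618 * ((2^(6+1)*K : ℕ) : ℝ) + f 100 :=
    hB (2^(6+1)*K) (by positivity) st6.s st6.hlen hcol
  have hKbig : 7*(f 100) + 1 < (528/1000) * K := by
    have h := lt_of_le_of_lt (le_max_right 0 ((7*(f 100)+1)/(528/1000))) hK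
    rw [div_lt_iff₀ (by norm_num)] at h
    linarith
  unfold NN at h6
  push_cast at h6 hub
  norm_num at h6 hub
  linarith

end Adv

theorem stmt_6 (f : ℝ → ℝ) :
    ¬ ∃ A : List (ℝ × ℝ) → ℕ, (∀ σ : ℝ, 1 ≤ σ → ProperAlg σ A) ∧
      ∀ σ : ℝ, 1 ≤ σ → ∀ ω : ℕ, 0 < ω → ∀ s : List (ℝ × ℝ),
        LengthsIn σ s → Colorable ω s →
          (colorsUsed A s : ℝ) ≤ 1.618 * (ω : ℝ) + f σ := by
  exact Adv.no_good_algorithm f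
end

section
/- Let γ ∈ [0,1], let n and k be positive integers, and let X₁, …, X_{4^n} be finite sets, each of cardinality k. Then either |X₁ ∪ ⋯ ∪ X_{4^n}| ≥ ((3+γ)/3)^n · k, or the index sequence 1, 2, …, 4^n can be covered by four disjoint nonempty consecutive intervals [l₁,r₁], …, [l₄,r₄] with l₁ = 1, l_{i+1} = r_i + 1 for i = 1,2,3, and r₄ = 4^n, such that setting Y_i = ∪_{j=l_i}^{r_i} X_j, the intersection is large: |Y₁ ∩ Y₂ ∩ Y₃ ∩ Y₄| ≥ (1−γ)·k. -/
open Finset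

lemma biUnion_union'' {α β : Type*} [DecidableEq α] [DecidableEq β] (s t : Finset α)
    (f : α → Finset β) : (s ∪ t).biUnion f = s.biUnion f ∪ t.biUnion f := by
  ext x
  simp only [Finset.mem_biUnion, Finset.mem_union]
  constructor
  · rintro ⟨a, ha | ha, hx⟩
    · exact Or.inl ⟨a, ha, hx⟩
    · exact Or.inr ⟨a, ha, hx⟩
  · rintro (⟨a, ha, hx⟩ | ⟨a, ha, hx⟩)
    · exact ⟨a, Or.inl ha, hx⟩
    · exact ⟨a, Or.inr ha, hx⟩

lemma shift_biUnion' {V : Type*} [DecidableEq V] (X : ℕ → Finset V) (off a b : ℕ) :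
    (Finset.Icc a b).biUnion (fun i => X (i + off)) = (Finset.Icc (a+off) (b+off)).biUnion X := by
  rw [← Finset.image_add_right_Icc, Finset.image_biUnion]

lemma four_count' {V : Type*} [DecidableEq V] (A B C D : Finset V) :
    A.card + B.card + C.card + D.card ≤ 3 * (A ∪ B ∪ C ∪ D).card + (A ∩ B ∩ C ∩ D).card := by
  classical
  set U := A ∪ B ∪ C ∪ D with hU
  have hsub : ∀ S : Finset V, S ⊆ U → S.card = ∑ x ∈ U, if x ∈ S then 1 else 0 := by
    intro S hS
    calc S.card = (U ∩ S).card := by rw [Finset.inter_eq_right.mpr hS]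
      _ = (U.filter (· ∈ S)).card := by rw [Finset.filter_mem_eq_inter]
      _ = ∑ x ∈ U, if x ∈ S then 1 else 0 := Finset.card_filter _ _
  rw [hsub A (by intro x hx; simp [hU, hx]), hsub B (by intro x hx; simp [hU, hx]),
    hsub C (by intro x hx; simp [hU, hx]), hsub D (by intro x hx; simp [hU, hx]),
    hsub (A ∩ B ∩ C ∩ D) (by intro x hx; simp only [Finset.mem_inter] at hx; simp [hU, hx.1.1.1])]
  have hUc : U.card = ∑ x ∈ U, 1 := by simp
  rw [hUc, Finset.mul_sum, ← Finset.sum_add_distrib, ← Finset.sum_add_distrib,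
    ← Finset.sum_add_distrib, ← Finset.sum_add_distrib]
  apply Finset.sum_le_sum
  intro x hx
  by_cases hA : x ∈ A <;> by_cases hB : x ∈ B <;> by_cases hC : x ∈ C <;> by_cases hD : x ∈ D <;>
    simp [hA, hB, hC, hD]

lemma split_lift' {V : Type*} [DecidableEq V] (γ : ℝ) (k : ℕ) (X : ℕ → Finset V)
    (m off N : ℕ) (hm : off + m ≤ N)
    (h : ∃ a b c : ℕ, 1 ≤ a ∧ a < b ∧ b < c ∧ c < m ∧
      (1 - γ) * (k : ℝ) ≤
        ((((Finset.Icc 1 a).biUnion (fun i => X (i + off))) ∩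
          ((Finset.Icc (a + 1) b).biUnion (fun i => X (i + off))) ∩
          ((Finset.Icc (b + 1) c).biUnion (fun i => X (i + off))) ∩
          ((Finset.Icc (c + 1) m).biUnion (fun i => X (i + off)))).card : ℝ)) :
    ∃ a b c : ℕ, 1 ≤ a ∧ a < b ∧ b < c ∧ c < N ∧
      (1 - γ) * (k : ℝ) ≤
        ((((Finset.Icc 1 a).biUnion X) ∩ ((Finset.Icc (a + 1) b).biUnion X) ∩
          ((Finset.Icc (b + 1) c).biUnion X) ∩
          ((Finset.Icc (c + 1) N).biUnion X)).card : ℝ) := by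
  obtain ⟨a, b, c, ha, hab, hbc, hcm, hcard⟩ := h
  refine ⟨a + off, b + off, c + off, by omega, by omega, by omega, by omega, ?_⟩
  simp only [shift_biUnion'] at hcard
  refine le_trans hcard ?_
  have hsub : ((Finset.Icc (1 + off) (a + off)).biUnion X ∩
      (Finset.Icc (a + 1 + off) (b + off)).biUnion X ∩
      (Finset.Icc (b + 1 + off) (c + off)).biUnion X ∩
      (Finset.Icc (c + 1 + off) (m + off)).biUnion X) ⊆
      ((Finset.Icc 1 (a + off)).biUnion X ∩ (Finset.Icc (a + off + 1) (b + off)).biUnion X ∩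
        (Finset.Icc (b + off + 1) (c + off)).biUnion X ∩
        (Finset.Icc (c + off + 1) N).biUnion X) := by
    refine Finset.inter_subset_inter (Finset.inter_subset_inter (Finset.inter_subset_inter ?_ ?_) ?_) ?_ <;>
      exact Finset.biUnion_subset_biUnion_of_subset_left X
        (Finset.Icc_subset_Icc (by omega) (by omega))
  exact_mod_cast Finset.card_le_card hsub

lemma key' {V : Type*} [DecidableEq V] (γ : ℝ) (hγ0 : 0 ≤ γ) (hγ1 : γ ≤ 1) (k : ℕ) :
    ∀ (n : ℕ) (X : ℕ → Finset V), (∀ i ∈ Finset.Icc 1 (4 ^ n), (X i).card = k) →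
    (((3 + γ) / 3) ^ n * (k : ℝ) ≤ (((Finset.Icc 1 (4 ^ n)).biUnion X).card : ℝ)) ∨
    ∃ a b c : ℕ, 1 ≤ a ∧ a < b ∧ b < c ∧ c < 4 ^ n ∧
      (1 - γ) * (k : ℝ) ≤
        ((((Finset.Icc 1 a).biUnion X) ∩ ((Finset.Icc (a + 1) b).biUnion X) ∩
          ((Finset.Icc (b + 1) c).biUnion X) ∩
          ((Finset.Icc (c + 1) (4 ^ n)).biUnion X)).card : ℝ) := by
  intro n
  induction n with
  | zero =>
    intro X hX
    left
    simp only [pow_zero, one_mul, Finset.Icc_self, Finset.singleton_biUnion]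
    rw [hX 1 (by simp)]
  | succ n IH =>
    intro X hX
    set m := 4 ^ n with hm
    have hm1 : 1 ≤ m := Nat.one_le_pow _ _ (by norm_num)
    have h4 : 4 ^ (n + 1) = 4 * m := by rw [pow_succ]; ring
    rw [h4] at hX ⊢
    have hXj : ∀ j, j ≤ 3 → ∀ i ∈ Finset.Icc 1 m, (X (i + j * m)).card = k := by
      intro j hj i hi
      apply hX
      simp only [Finset.mem_Icc] at hi ⊢
      have := Nat.mul_le_mul_right m hj
      omega
    have lift : ∀ j, j ≤ 3 →
        (∃ a b c : ℕ, 1 ≤ a ∧ a < b ∧ b < c ∧ c < m ∧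
          (1 - γ) * (k : ℝ) ≤
            ((((Finset.Icc 1 a).biUnion (fun i => X (i + j * m))) ∩
              ((Finset.Icc (a + 1) b).biUnion (fun i => X (i + j * m))) ∩
              ((Finset.Icc (b + 1) c).biUnion (fun i => X (i + j * m))) ∩
              ((Finset.Icc (c + 1) m).biUnion (fun i => X (i + j * m)))).card : ℝ)) →
        ∃ a b c : ℕ, 1 ≤ a ∧ a < b ∧ b < c ∧ c < 4 * m ∧
          (1 - γ) * (k : ℝ) ≤
            ((((Finset.Icc 1 a).biUnion X) ∩ ((Finset.Icc (a + 1) b).biUnion X) ∩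
              ((Finset.Icc (b + 1) c).biUnion X) ∩
              ((Finset.Icc (c + 1) (4 * m)).biUnion X)).card : ℝ) := by
      intro j hj h
      refine split_lift' γ k X m (j * m) (4 * m) ?_ h
      have := Nat.mul_le_mul_right m hj
      omega
    rcases IH (fun i => X (i + 0 * m)) (hXj 0 (by norm_num)) with h0 | h0
    swap
    · exact Or.inr (lift 0 (by norm_num) h0)
    rcases IH (fun i => X (i + 1 * m)) (hXj 1 (by norm_num)) with h1 | h1
    swap
    · exact Or.inr (lift 1 (by norm_num) h1)
    rcases IH (fun i => X (i + 2 * m)) (hXj 2 (by norm_num)) with h2 | h2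
    swap
    · exact Or.inr (lift 2 (by norm_num) h2)
    rcases IH (fun i => X (i + 3 * m)) (hXj 3 (by norm_num)) with h3 | h3
    swap
    · exact Or.inr (lift 3 (by norm_num) h3)
    -- all blocks have big unions
    simp only [shift_biUnion'] at h0 h1 h2 h3
    set Y0 := (Finset.Icc 1 m).biUnion X with hY0
    set Y1 := (Finset.Icc (m + 1) (2 * m)).biUnion X with hY1
    set Y2 := (Finset.Icc (2 * m + 1) (3 * m)).biUnion X with hY2
    set Y3 := (Finset.Icc (3 * m + 1) (4 * m)).biUnion X with hY3
    have e0 : Finset.Icc (1 + 0 * m) (m + 0 * m) = Finset.Icc 1 m := by congr 1 <;> omega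
    have e1 : Finset.Icc (1 + 1 * m) (m + 1 * m) = Finset.Icc (m + 1) (2 * m) := by congr 1 <;> omega
    have e2 : Finset.Icc (1 + 2 * m) (m + 2 * m) = Finset.Icc (2 * m + 1) (3 * m) := by congr 1 <;> omega
    have e3 : Finset.Icc (1 + 3 * m) (m + 3 * m) = Finset.Icc (3 * m + 1) (4 * m) := by congr 1 <;> omega
    rw [e0] at h0; rw [e1] at h1; rw [e2] at h2; rw [e3] at h3
    by_cases hI : (1 - γ) * (k : ℝ) ≤ ((Y0 ∩ Y1 ∩ Y2 ∩ Y3).card : ℝ)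
    · right
      exact ⟨m, 2 * m, 3 * m, by omega, by omega, by omega, by omega, hI⟩
    · left
      push_neg at hI
      have hIcc : Finset.Icc 1 (4 * m) =
          Finset.Icc 1 m ∪ Finset.Icc (m + 1) (2 * m) ∪ Finset.Icc (2 * m + 1) (3 * m) ∪
            Finset.Icc (3 * m + 1) (4 * m) := by
        ext i
        simp only [Finset.mem_Icc, Finset.mem_union]
        omega
      rw [hIcc, biUnion_union'', biUnion_union'', biUnion_union'']
      have hc := four_count' Y0 Y1 Y2 Y3
      have hc' : (Y0.card : ℝ) + Y1.card + Y2.card + Y3.card ≤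
          3 * ((Y0 ∪ Y1 ∪ Y2 ∪ Y3).card : ℝ) + ((Y0 ∩ Y1 ∩ Y2 ∩ Y3).card : ℝ) := by
        exact_mod_cast hc
      have hr : (1 : ℝ) ≤ (3 + γ) / 3 := by linarith
      have hrn : (1 : ℝ) ≤ ((3 + γ) / 3) ^ n := one_le_pow₀ hr
      have hk0 : (0 : ℝ) ≤ (k : ℝ) := Nat.cast_nonneg k
      rw [pow_succ]
      nlinarith [mul_nonneg (mul_nonneg (sub_nonneg.mpr hγ1) hk0) (sub_nonneg.mpr hrn)]

theorem stmt_14 {V : Type*} [DecidableEq V] (γ : ℝ) (hγ : γ ∈ Set.Icc (0 : ℝ) 1)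
    (n k : ℕ) (hn : 0 < n) (hk : 0 < k) (X : ℕ → Finset V)
    (hX : ∀ i ∈ Finset.Icc 1 (4 ^ n), (X i).card = k) :
    (((3 + γ) / 3) ^ n * (k : ℝ) ≤ (((Finset.Icc 1 (4 ^ n)).biUnion X).card : ℝ)) ∨
    ∃ a b c : ℕ, 1 ≤ a ∧ a < b ∧ b < c ∧ c < 4 ^ n ∧
      (1 - γ) * (k : ℝ) ≤
        ((((Finset.Icc 1 a).biUnion X) ∩ ((Finset.Icc (a + 1) b).biUnion X) ∩
          ((Finset.Icc (b + 1) c).biUnion X) ∩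
          ((Finset.Icc (c + 1) (4 ^ n)).biUnion X)).card : ℝ) :=
  key' γ hγ.1 hγ.2 k n X hX
end
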